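/- arXiv:0810.4796 — 7 statements merged into one kernel-verified Lean document; each statement's English description precedes it below -/
import Mathlib

section
/- Let D be a digraph and r a vertex of D from which every vertex of D is reachable. If D contains an out-tree rooted at r with k leaves, then D contains a spanning out-tree (out-branching) rooted at r with at least k leaves. -/
universe u

variable {V : Type u}

/-- `T` is an out-tree of the digraph `D` rooted at `r` spanning the vertex set `S`:
an oriented tree with all arcs directed away from the unique root `r`. -/
structure IsOutTreeOn (D : V → V → Prop) (r : V) (S : Set V) (T : V → V → Prop) : Prop where
  sub : ∀ u v, T u v → D u v
  mem_left : ∀ u v, T u v → u ∈ S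
  mem_right : ∀ u v, T u v → v ∈ S
  root_mem : r ∈ S
  no_in_root : ∀ u, ¬ T u r
  unique_parent : ∀ v ∈ S, v ≠ r → ∃! u, T u v
  reach : ∀ v ∈ S, Relation.ReflTransGen T r v

/-- An out-branching of `D` rooted at `r`: a spanning out-tree. -/
def IsOutBranching (D : V → V → Prop) (r : V) (T : V → V → Prop) : Prop :=
  IsOutTreeOn D r Set.univ T

/-- The leaves of an out-tree `T` on vertex set `S`: vertices of out-degree 0. -/
def treeLeaves (T : V → V → Prop) (S : Set V) : Set V :=
  {v ∈ S | ∀ w, ¬ T v w}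

def HasOutBranchingWithLeaves (D : V → V → Prop) (r : V) (k : ℕ) : Prop :=
  ∃ T : V → V → Prop, IsOutBranching D r T ∧ k ≤ (treeLeaves T Set.univ).ncard

def HasOutBranchingOnWithLeaves (D : V → V → Prop) (r : V) (S : Set V) (k : ℕ) : Prop :=
  ∃ T : V → V → Prop, IsOutTreeOn D r S T ∧ k ≤ (treeLeaves T S).ncard

def HasOutTreeWithLeaves (D : V → V → Prop) (k : ℕ) : Prop :=
  ∃ (r : V) (S : Set V) (T : V → V → Prop),
    IsOutTreeOn D r S T ∧ k ≤ (treeLeaves T S).ncard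

/-- A (directed) walk in `D` from `a` to `b`, given by its list of vertices. -/
def IsWalk (D : V → V → Prop) (a b : V) (q : List V) : Prop :=
  q ≠ [] ∧ q.head? = some a ∧ q.getLast? = some b ∧ q.Chain' D

/-- The vertex `u` disconnects `v` from the root `r`:
every directed path from `r` to `v` contains `u`. -/
def VertexDisconnects (D : V → V → Prop) (r u v : V) : Prop :=
  u ≠ v ∧ ∀ q : List V, IsWalk D r v q → u ∈ q

/-- The vertex set `S` disconnects `v` from the root `r`. -/
def SetDisconnects (D : V → V → Prop) (r : V) (S : Set V) (v : V) : Prop :=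
  v ∉ S ∧ ∀ q : List V, IsWalk D r v q → ∃ x ∈ S, x ∈ q

/-- The arc `(u, v)` disconnects `w` from the root `r`:
every directed path from `r` to `w` uses the arc `(u, v)`. -/
def ArcDisconnects (D : V → V → Prop) (r u v w : V) : Prop :=
  ∀ q : List V, IsWalk D r w q → (u, v) ∈ q.zip q.tail

/-- A BFS tree of `D` rooted at `r`: an out-branching together with a level (depth)
function such that `D` has no forward arcs. -/
structure IsBFSTree (D : V → V → Prop) (r : V) (T : V → V → Prop) (depth : V → ℕ) : Prop where
  branching : IsOutBranching D r T
  level : ∀ u v, T u v → depth v = depth u + 1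
  root_level : depth r = 0
  no_forward : ∀ u v, D u v → depth v ≤ depth u + 1

/-- Contraction of the arc `(u, v)`: the new vertex is identified with `u`,
and `v` is removed. -/
def contractArc (D : V → V → Prop) (u v : V) : V → V → Prop :=
  fun a b => a ≠ v ∧ b ≠ v ∧ a ≠ b ∧
    (D a b ∨ (a = u ∧ D v b) ∨ (b = u ∧ D a v))

/-- Reduction Rule 5 (two directional path rule) is applicable to `D`. -/
def Rule5Applicable (D : V → V → Prop) : Prop :=
  ∃ l : ℕ, (l = 7 ∨ l = 8) ∧
    ∃ pp : ℕ → V, Set.InjOn pp (Set.Iio l) ∧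
      (∀ i, i + 1 < l → D (pp i) (pp (i + 1))) ∧
      ∃ pin ∈ ({pp (l - 2), pp (l - 1)} : Set V),
        ∃ pout ∈ ({pp 0, pp 1} : Set V),
          (∀ v ∈ pp '' Set.Iio l, (∃ u, u ∉ pp '' Set.Iio l ∧ D u v) → v = pp 0 ∨ v = pin) ∧
          (∀ v ∈ pp '' Set.Iio l, (∃ u, u ∉ pp '' Set.Iio l ∧ D v u) → v = pp (l - 1) ∨ v = pout) ∧
          IsOutTreeOn D (pp 0) (pp '' Set.Iio l)
            (fun a b => ∃ i, i + 1 < l ∧ a = pp i ∧ b = pp (i + 1)) ∧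
          (∀ T : V → V → Prop, IsOutTreeOn D (pp 0) (pp '' Set.Iio l) T →
            T = fun a b => ∃ i, i + 1 < l ∧ a = pp i ∧ b = pp (i + 1)) ∧
          ∃ Q : V → V → Prop,
            IsOutTreeOn D pin (pp '' Set.Iio l) Q ∧
            (∀ v, {w | Q v w}.ncard ≤ 1) ∧
            (∀ T : V → V → Prop, IsOutTreeOn D pin (pp '' Set.Iio l) T → T = Q) ∧
            (∀ i, i + 1 < l → pout = pp i → ∀ bq, Q (pp (l - 1)) bq → pp (i + 1) ≠ bq)

/-- `D` with root `r` is reduced: none of the five reduction rules applies. -/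
structure Reduced (D : V → V → Prop) (r : V) : Prop where
  reach : ∀ v, Relation.ReflTransGen D r v
  rule2 : ∀ u v, VertexDisconnects D r u v → ¬ D v u
  rule3 : ∀ u v w₁ w₂, D u v → w₁ ≠ w₂ →
    ArcDisconnects D r u v w₁ → ArcDisconnects D r u v w₂ → False
  rule4 : ∀ (S : Set V) (v w : V), S.ncard ≤ 2 → SetDisconnects D r S v →
    (∀ x ∈ S, D x w) → ¬ D v w
  rule5 : ¬ Rule5Applicable D

/-- A nice forest `F` of the path `p 0, p 1, …, p l`, a spanning subforest of
`D[V(P)]` consisting of out-trees rooted at the vertices of `S`. -/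
def NiceForest (D : V → V → Prop) (l : ℕ) (p : ℕ → V) (S : Set V)
    (F : V → V → Prop) : Prop :=
  (∀ u v, F u v → D u v ∧ u ∈ p '' Set.Iic l ∧ v ∈ p '' Set.Iic l) ∧
  (∀ s ∈ S, ∀ u, ¬ F u s) ∧
  (∀ v ∈ p '' Set.Iic l, v ∉ S → ∃! u, F u v) ∧
  (∀ v ∈ p '' Set.Iic l, ∃ s ∈ S, Relation.ReflTransGen F s v) ∧
  (∀ i j, i ≤ l → j ≤ l → i < j → F (p i) (p j) →
    2 ≤ {w | F (p i) w}.ncard ∨ {u | D u (p j)}.ncard = 1) ∧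
  (∀ i j, i ≤ l → j ≤ l → j < i → F (p i) (p j) → ∀ q, i < q → q ≤ l → ¬ D (p q) (p j))

/-- The key vertices of a nice forest `F`: the roots `S`, the leaves of `F`,
the vertices of out-degree at least 2 in `F`, and their children. -/
def keyVertices (l : ℕ) (p : ℕ → V) (S : Set V) (F : V → V → Prop) : Set V :=
  S ∪ treeLeaves F (p '' Set.Iic l) ∪ {v | 2 ≤ {w | F v w}.ncard} ∪
    {v | ∃ u, F u v ∧ 2 ≤ {w | F u w}.ncard}

/-- A nice willow graph with stem `p 0, p 1, …, p (n-1)` (bottom `p 0`, top `p (n-1)`)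
and backward-arc set `A2`. -/
structure IsNiceWillow (A2 : V → V → Prop) (n : ℕ) (p : ℕ → V) : Prop where
  three_le : 3 ≤ n
  inj : Set.InjOn p (Set.Iio n)
  surj : ∀ v, ∃ i < n, p i = v
  backward : ∀ u v, A2 u v → ∃ i j, i < n ∧ j < i ∧ u = p i ∧ v = p j
  unique_source : ∀ i, i + 1 < n → ∃ u, A2 u (p i)
  top_arc1 : A2 (p (n - 1)) (p (n - 2))
  top_arc2 : A2 (p (n - 1)) (p (n - 3))
  only1 : ∀ u v, A2 u v → (u = p (n - 2) ∨ v = p (n - 2)) →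
    u = p (n - 1) ∧ v = p (n - 2)
  only2 : ∀ u v, A2 u v → (u = p (n - 3) ∨ v = p (n - 3)) →
    u = p (n - 1) ∧ v = p (n - 3)
  branch : ∃ T : V → V → Prop, IsOutBranching A2 (p (n - 1)) T

/-- The digraph of a willow: the stem arcs together with the backward arcs `A2`. -/
def willowD (A2 : V → V → Prop) (n : ℕ) (p : ℕ → V) : V → V → Prop :=
  fun a b => (∃ i, i + 1 < n ∧ a = p i ∧ b = p (i + 1)) ∨ A2 a b

/-- Disjoint union of a family of digraphs. -/
def sigmaUnion {ι : Type*} {Vv : ι → Type*} (W : ∀ i, Vv i → Vv i → Prop) :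
    (Σ i, Vv i) → (Σ i, Vv i) → Prop :=
  fun x y => ∃ h : y.1 = x.1, W x.1 x.2 (cast (congrArg Vv h) y.2)

/-- Vertices of the digraph constructed from a Set Cover instance. -/
inductive SCVert (m n : ℕ) : Type
  | root : SCVert m n
  | pv : SCVert m n
  | pv' : SCVert m n
  | s : Fin m → SCVert m n
  | e : Fin n → SCVert m n

/-- Arcs of the digraph constructed from a Set Cover instance. -/
def scArcs (m n : ℕ) (Fam : Fin m → Set (Fin n)) : SCVert m n → SCVert m n → Prop
  | .root, .s _ => True
  | .root, .pv => True
  | .root, .pv' => True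
  | .s i, .e j => j ∈ Fam i
  | .e a, .e c => (c : ℕ) + 1 = (a : ℕ)
  | .s a, .s c => (c : ℕ) + 1 = (a : ℕ)
  | .e a, .s c => (a : ℕ) = 0 ∧ (c : ℕ) + 1 = m
  | .s a, .pv => (a : ℕ) = 0
  | .pv, .pv' => True
  | .pv', .root => True
  | _, _ => False

lemma cross_arc {D : V → V → Prop} {S : Set V} {r v : V} (hr : r ∈ S)
    (h : Relation.ReflTransGen D r v) (hv : v ∉ S) :
    ∃ u ∈ S, ∃ w, w ∉ S ∧ D u w := by
  induction h with
  | refl => exact absurd hr hv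
  | @tail b c h1 h2 ih =>
    by_cases hb : b ∈ S
    · exact ⟨b, hb, c, hv, h2⟩
    · exact ih hb

lemma extend_tree [Fintype V] (D : V → V → Prop) (r : V)
    (hreach : ∀ v, Relation.ReflTransGen D r v) :
    ∀ n (S : Set V) (T : V → V → Prop), Sᶜ.ncard = n → IsOutTreeOn D r S T →
    ∃ T' : V → V → Prop, IsOutBranching D r T' ∧
      (treeLeaves T S).ncard ≤ (treeLeaves T' Set.univ).ncard := by
  intro n
  induction n using Nat.strong_induction_on with
  | _ n ih =>
  intro S T hn hT
  rcases eq_or_ne n 0 with rfl | hn0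
  · have hSc : Sᶜ = ∅ := Set.ncard_eq_zero (Set.toFinite _) |>.mp hn
    have hS : S = Set.univ := by
      rw [← Set.compl_empty_iff]; exact hSc
    subst hS
    exact ⟨T, hT, le_refl _⟩
  · have hScne : Sᶜ.Nonempty := by
      rw [Set.nonempty_iff_ne_empty]
      intro h
      exact hn0 (by rw [← hn, h, Set.ncard_empty])
    obtain ⟨v, hv⟩ := hScne
    obtain ⟨u, hu, w, hw, huw⟩ := cross_arc hT.root_mem (hreach v) hv
    set T' : V → V → Prop := fun a b => T a b ∨ (a = u ∧ b = w) with hT'def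
    have hwS : ∀ x, ¬ T x w := fun x hx => hw (hT.mem_right _ _ hx)
    have hwu : w ≠ u := fun h => hw (h ▸ hu)
    have hwr : w ≠ r := fun h => hw (h ▸ hT.root_mem)
    have hT' : IsOutTreeOn D r (insert w S) T' := by
      constructor
      · rintro a b (h | ⟨rfl, rfl⟩)
        · exact hT.sub _ _ h
        · exact huw
      · rintro a b (h | ⟨rfl, rfl⟩)
        · exact Set.mem_insert_of_mem _ (hT.mem_left _ _ h)
        · exact Set.mem_insert_of_mem _ hu
      · rintro a b (h | ⟨rfl, rfl⟩)
        · exact Set.mem_insert_of_mem _ (hT.mem_right _ _ h)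
        · exact Set.mem_insert _ _
      · exact Set.mem_insert_of_mem _ hT.root_mem
      · rintro a (h | ⟨rfl, rfl⟩)
        · exact hT.no_in_root _ h
        · exact hwr rfl
      · rintro x (rfl | hx) hxr
        · refine ⟨u, Or.inr ⟨rfl, rfl⟩, ?_⟩
          rintro y (h | ⟨rfl, -⟩)
          · exact absurd h (hwS y)
          · rfl
        · by_cases hxw : x = w
          · subst hxw
            refine ⟨u, Or.inr ⟨rfl, rfl⟩, ?_⟩
            rintro y (h | ⟨rfl, -⟩)
            · exact absurd h (hwS y)
            · rfl
          · obtain ⟨p, hp, hpu⟩ := hT.unique_parent x hx hxr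
            refine ⟨p, Or.inl hp, ?_⟩
            rintro y (h | ⟨rfl, rfl⟩)
            · exact hpu y h
            · exact absurd rfl hxw
      · rintro x (rfl | hx)
        · exact Relation.ReflTransGen.tail
            (Relation.ReflTransGen.mono (fun a b h => Or.inl h) _ _ (hT.reach u hu)) (Or.inr ⟨rfl, rfl⟩)
        · exact Relation.ReflTransGen.mono (fun a b h => Or.inl h) _ _ (hT.reach x hx)
    have hcard : ((insert w S)ᶜ).ncard < n := by
      rw [← hn]
      have : (insert w S)ᶜ = Sᶜ \ {w} := by
        ext x; simp [Set.mem_compl_iff, and_comm]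
      rw [this]
      exact Set.ncard_diff_singleton_lt_of_mem hw (Set.toFinite _)
    obtain ⟨T'', hT'', hle⟩ := ih _ hcard (insert w S) T' rfl hT'
    refine ⟨T'', hT'', le_trans ?_ hle⟩
    -- leaves of T ≤ leaves of T'
    have hsub : insert w (treeLeaves T S \ {u}) ⊆ treeLeaves T' (insert w S) := by
      rintro x (rfl | ⟨⟨hxS, hxl⟩, hxu⟩)
      · refine ⟨Set.mem_insert _ _, ?_⟩
        rintro y (h | ⟨h2, -⟩)
        · exact hw (hT.mem_left _ _ h)
        · exact hwu h2
      · refine ⟨Set.mem_insert_of_mem _ hxS, ?_⟩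
        rintro y (h | ⟨rfl, rfl⟩)
        · exact hxl y h
        · exact hxu rfl
    calc (treeLeaves T S).ncard
        ≤ (insert u (treeLeaves T S \ {u})).ncard := by
          apply Set.ncard_le_ncard _ (Set.toFinite _)
          intro x hx
          by_cases hxu : x = u
          · exact hxu ▸ Set.mem_insert _ _
          · exact Set.mem_insert_of_mem _ ⟨hx, hxu⟩
      _ ≤ (treeLeaves T S \ {u}).ncard + 1 := Set.ncard_insert_le _ _
      _ = (insert w (treeLeaves T S \ {u})).ncard := by
          rw [Set.ncard_insert_of_notMem _ (Set.toFinite _)]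
          rintro ⟨⟨hwS', _⟩, _⟩
          exact hw hwS'
      _ ≤ (treeLeaves T' (insert w S)).ncard :=
          Set.ncard_le_ncard hsub (Set.toFinite _)

theorem stmt0 [Fintype V] (D : V → V → Prop) (r : V)
    (hreach : ∀ v, Relation.ReflTransGen D r v)
    (k : ℕ) (S : Set V) (T : V → V → Prop)
    (hT : IsOutTreeOn D r S T) (hk : k ≤ (treeLeaves T S).ncard) :
    HasOutBranchingWithLeaves D r k := by
  obtain ⟨T', hT', hle⟩ := extend_tree D r hreach _ S T rfl hT
  exact ⟨T', hT', le_trans hk hle⟩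
end

section
/- Let D be a digraph with root r, and suppose every path from r to a vertex v in D passes through a vertex u (i.e., u disconnects v from r). Then no out-branching of D rooted at r contains the arc (v, u); that is, D has an r-out-branching with at least k leaves if and only if D with the arc (v, u) deleted has an r-out-branching with at least k leaves. -/
universe u

variable {V : Type u}

theorem stmt1 [Fintype V] (D : V → V → Prop) (r u v : V) (k : ℕ)
    (hdis : ∀ q : List V, IsWalk D r v q → u ∈ q) :
    (∀ T : V → V → Prop, IsOutBranching D r T → ¬ T v u) ∧
    (HasOutBranchingWithLeaves D r k ↔
      HasOutBranchingWithLeaves (fun a b => D a b ∧ ¬(a = v ∧ b = u)) r k) := by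
  
  classical
  have key : ∀ T : V → V → Prop, IsOutBranching D r T → ¬ T v u := by
    intro T hT htvu
    have hur : u ≠ r := fun h => hT.no_in_root v (h ▸ htvu)
    obtain ⟨l, hchain, hlast⟩ :=
      List.exists_isChain_cons_of_relationReflTransGen (hT.reach v (Set.mem_univ v))
    set q : List V := r :: l with hq
    have hqne : q ≠ [] := by simp [hq]
    have hwT : IsWalk T r v q :=
      ⟨hqne, rfl, by rw [List.getLast?_eq_getLast hqne]; exact congrArg some hlast,
       hchain⟩
    have hwD : IsWalk D r v q :=
      ⟨hwT.1, hwT.2.1, hwT.2.2.1, hwT.2.2.2.imp (fun {a b} h => hT.sub a b h)⟩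
    have hu : u ∈ q := hdis q hwD
    obtain ⟨i0, hi0, hqi0⟩ := List.getElem_of_mem hu
    have hex : ∃ i, ∃ h : i < q.length, q[i] = u := ⟨i0, hi0, hqi0⟩
    set i := Nat.find hex with hi
    obtain ⟨hilt, hqi⟩ := Nat.find_spec hex
    have hipos : 0 < i := by
      rcases Nat.eq_zero_or_pos i with h0 | h
      · exfalso; apply hur; rw [← hqi]; simp only [← hi, h0, hq]; rfl
      · exact h
    have hTprev : T q[i-1] q[i] := by
      have := List.isChain_iff_getElem.mp hwT.2.2.2 (i-1) (by omega)
      simpa [Nat.sub_add_cancel hipos] using this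
    have hprev : q[i-1] = v := by
      obtain ⟨p, hp, hpu⟩ := hT.unique_parent u (Set.mem_univ u) hur
      have h1 : T q[i-1] u := by convert hTprev using 1; exact hqi.symm
      exact (hpu _ h1).trans (hpu v htvu).symm
    have htlen : (q.take i).length = i := by
      rw [List.length_take]; omega
    have hwpre : IsWalk D r v (q.take i) := by
      refine ⟨by intro h; rw [h] at htlen; simp at htlen; omega,
        by rw [List.head?_take]; simp [hq, Nat.pos_iff_ne_zero.mp hipos],
        ?_, hwD.2.2.2.take i⟩
      rw [List.getLast?_eq_getElem?, htlen, List.getElem?_eq_getElem (by omega : i - 1 < (q.take i).length), List.getElem_take]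
      exact congrArg some hprev
    have hu2 : u ∈ q.take i := hdis _ hwpre
    obtain ⟨j, hj, hqj⟩ := List.getElem_of_mem hu2
    rw [List.getElem_take] at hqj
    exact Nat.find_min hex (lt_of_lt_of_le hj (le_of_eq htlen)) ⟨by omega, hqj⟩
  refine ⟨key, ?_, ?_⟩
  · rintro ⟨T, hT, hk⟩
    refine ⟨T, ⟨fun a b h => ⟨hT.sub a b h, fun ⟨ha, hb⟩ => key T hT (ha ▸ hb ▸ h)⟩,
      hT.mem_left, hT.mem_right, hT.root_mem, hT.no_in_root, hT.unique_parent, hT.reach⟩, hk⟩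
  · rintro ⟨T, hT, hk⟩
    exact ⟨T, ⟨fun a b h => (hT.sub a b h).1,
      hT.mem_left, hT.mem_right, hT.root_mem, hT.no_in_root, hT.unique_parent, hT.reach⟩, hk⟩
end

section
/- Let T be a BFS tree (an out-branching with no forward arcs) of a digraph D rooted at r, and let P = p_1 p_2 ... p_l be a directed path in T all of whose vertices have out-degree 1 in T. Then for any i < l, the only arc of D from the vertex set {p_1, ..., p_i} to {p_{i+1}, ..., p_l} is the arc (p_i, p_{i+1}); consequently, the path p_i p_{i+1} ... p_j is the unique directed path from p_i to p_j in the induced subdigraph D[V(P)] for any i < j. -/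
universe u

variable {V : Type u}

theorem stmt4 (D T : V → V → Prop) (r : V) (depth : V → ℕ)
    (hBFS : IsBFSTree D r T depth)
    (l : ℕ) (p : ℕ → V) (hinj : Set.InjOn p (Set.Iic l))
    (hpath : ∀ i, i < l → T (p i) (p (i + 1)))
    (hdeg : ∀ i, i ≤ l → ∃! w, T (p i) w) :
    (∀ i a b, i < l → a ≤ i → i < b → b ≤ l → D (p a) (p b) → a = i ∧ b = i + 1) ∧
    (∀ i j, i ≤ j → j ≤ l → ∀ q : List V,
      IsWalk (fun a b => D a b ∧ a ∈ p '' Set.Iic l ∧ b ∈ p '' Set.Iic l) (p i) (p j) q →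
      q.Nodup → q = (List.range (j - i + 1)).map (fun t => p (i + t))) := by
  obtain ⟨hbr, hlevel, hroot, hnf⟩ := hBFS
  have hdepth : ∀ k, k ≤ l → depth (p k) = depth (p 0) + k := by
    intro k hk
    induction k with
    | zero => simp
    | succ n ih =>
      have h1 := hlevel _ _ (hpath n (by omega))
      rw [h1, ih (by omega)]; omega
  have hstep : ∀ a b, a ≤ l → b ≤ l → D (p a) (p b) → b ≤ a + 1 := by
    intro a b ha hb hD
    have := hnf _ _ hD
    rw [hdepth a ha, hdepth b hb] at this; omega
  have part1 : ∀ i a b, i < l → a ≤ i → i < b → b ≤ l → D (p a) (p b) →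
      a = i ∧ b = i + 1 := by
    intro i a b h1 h2 h3 h4 hD
    have := hstep a b (by omega) h4 hD
    omega
  refine ⟨part1, ?_⟩
  set D' : V → V → Prop :=
    fun a b => D a b ∧ a ∈ p '' Set.Iic l ∧ b ∈ p '' Set.Iic l with hD'
  -- intermediate value lemma: any D'-walk from p a to p c with a < i ≤ c contains p i
  have lemD : ∀ q : List V, ∀ a c, a ≤ l → c ≤ l →
      IsWalk D' (p a) (p c) q → ∀ i, a < i → i ≤ c → p i ∈ q := by
    intro q
    induction q with
    | nil => intro a c _ _ hw; exact absurd rfl hw.1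
    | cons x q' ih =>
      intro a c ha hc hw i hai hic
      obtain ⟨hne, hhead, hlast, hchain⟩ := hw
      have hx : x = p a := by simpa using hhead
      subst hx
      cases q' with
      | nil =>
        have hac : p a = p c := by simpa using hlast
        have : a = c := hinj (Set.mem_Iic.mpr ha) (Set.mem_Iic.mpr hc) hac
        omega
      | cons y q'' =>
        replace hchain := List.isChain_cons_cons.mp hchain
        obtain ⟨hD1, hchain2⟩ := hchain
        obtain ⟨hDab, -, ⟨b, hb, rfl⟩⟩ := hD1
        have hb1 : b ≤ a + 1 := hstep a b ha hb hDab
        have hlast2 : (p b :: q'').getLast? = some (p c) := by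
          rw [← hlast]; exact List.getLast?_cons_cons.symm
        have hw' : IsWalk D' (p b) (p c) (p b :: q'') :=
          ⟨by simp, rfl, hlast2, hchain2⟩
        by_cases hbi : b < i
        · exact List.mem_cons_of_mem _ (ih b c hb hc hw' i hbi hic)
        · have : b = i := by omega
          subst this
          exact List.mem_cons_of_mem _ (List.mem_cons_self)
  intro i j hij hjl q hw hnd
  induction q generalizing i with
  | nil => exact absurd rfl hw.1
  | cons x q' ih =>
    obtain ⟨hne, hhead, hlast, hchain⟩ := hw
    have hx : x = p i := by simpa using hhead
    subst hx
    have hil : i ≤ l := le_trans hij hjl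
    cases q' with
    | nil =>
      have hij' : p i = p j := by simpa using hlast
      have : i = j := hinj (Set.mem_Iic.mpr hil) (Set.mem_Iic.mpr hjl) hij'
      subst this
      simp [List.range_succ]
    | cons y q'' =>
      replace hchain := List.isChain_cons_cons.mp hchain
      obtain ⟨hD1, hchain2⟩ := hchain
      obtain ⟨hDab, -, ⟨b, hb, rfl⟩⟩ := hD1
      have hble : b ≤ i + 1 := hstep i b hil hb hDab
      have hlast2 : (p b :: q'').getLast? = some (p j) := by
        rw [← hlast]; exact List.getLast?_cons_cons.symm
      have hw' : IsWalk D' (p b) (p j) (p b :: q'') :=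
        ⟨by simp, rfl, hlast2, hchain2⟩
      have hnd' : (p b :: q'').Nodup := (List.nodup_cons.mp hnd).2
      have hpnot : p i ∉ (p b :: q'') := (List.nodup_cons.mp hnd).1
      have hbi : b ≠ i := fun h => hpnot (h ▸ List.mem_cons_self)
      have hbeq : b = i + 1 := by
        by_contra h
        exact hpnot (lemD _ b j hb hjl hw' i (by omega) hij)
      subst hbeq
      have hjmem : p j ∈ (p (i + 1) :: q'') := List.mem_of_getLast? hlast2
      have hji : j ≠ i := fun h => hpnot (h ▸ hjmem)
      have hij2 : i + 1 ≤ j := by omega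
      have hrec := ih (i + 1) hij2 hw' hnd'
      have hn : j - i + 1 = (j - (i + 1) + 1) + 1 := by omega
      have key : ∀ n k : ℕ, (List.range (n + 1)).map (fun t => p (k + t)) =
          p k :: (List.range n).map (fun t => p (k + 1 + t)) := by
        intro n k
        rw [List.range_succ_eq_map, List.map_cons, List.map_map]
        simp only [Nat.add_zero]
        congr 1
        apply List.map_congr_left
        intro t _
        simp only [Function.comp_apply]
        congr 1
        omega
      rw [hn, key, ← hrec]
end

section
/- Let D be a reduced no-instance digraph with root r, T a BFS tree, P a path of out-degree-1 vertices of T, F a nice forest of P with the maximum number of leaves, and P' = p_x ... p_y a subpath of P containing no key vertices of F such that neither (p_{x-1}, p_x) nor (p_y, p_{y+1}) is an arc of F. Then F restricted to V(P') is a single directed path. -/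
universe u

variable {V : Type u}

theorem stmt9 [Fintype V] (D T : V → V → Prop) (r : V) (depth : V → ℕ) (k : ℕ)
    (hred : Reduced D r)
    (hno : ¬ HasOutBranchingWithLeaves D r k)
    (hBFS : IsBFSTree D r T depth)
    (l : ℕ) (p : ℕ → V) (hinj : Set.InjOn p (Set.Iic l))
    (hpath : ∀ i, i < l → T (p i) (p (i + 1)))
    (hdeg : ∀ i, i ≤ l → ∃! w, T (p i) w)
    (S : Set V)
    (hS : S = {v ∈ p '' Set.Iio l | ∃ u, u ∉ p '' Set.Iic l ∧ D u v})
    (F : V → V → Prop) (hF : NiceForest D l p S F)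
    (hmax : ∀ F' : V → V → Prop, NiceForest D l p S F' →
      (treeLeaves F' (p '' Set.Iic l)).ncard ≤ (treeLeaves F (p '' Set.Iic l)).ncard)
    (x y : ℕ) (hx : 1 ≤ x) (hxy : x ≤ y) (hy : y < l)
    (hnokey : ∀ i, x ≤ i → i ≤ y → p i ∉ keyVertices l p S F)
    (hb1 : ¬ F (p (x - 1)) (p x)) (hb2 : ¬ F (p y) (p (y + 1))) :
    ∃ qf : ℕ → V, Set.InjOn qf (Set.Iic (y - x)) ∧
      qf '' Set.Iic (y - x) = p '' Set.Icc x y ∧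
      (∀ a b, (F a b ∧ a ∈ p '' Set.Icc x y ∧ b ∈ p '' Set.Icc x y) ↔
        ∃ i, i < y - x ∧ a = qf i ∧ b = qf (i + 1)) := by
  classical
  obtain ⟨hF1, hF2, hF3, hF4, hF5, hF6⟩ := hF
  have hyl : y ≤ l := Nat.le_of_lt hy
  have hmemP : ∀ i, i ≤ l → p i ∈ p '' Set.Iic l := fun i hi => ⟨i, hi, rfl⟩
  have hinj' : ∀ a b, a ≤ l → b ≤ l → p a = p b → a = b := fun a b ha hb h =>
    hinj (Set.mem_Iic.mpr ha) (Set.mem_Iic.mpr hb) h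
  -- depth along the path
  have hd : ∀ i, i ≤ l → depth (p i) = depth (p 0) + i := by
    intro i
    induction i with
    | zero => intro _; simp
    | succ n ih =>
      intro h
      have hT := hpath n (by omega)
      rw [hBFS.level _ _ hT, ih (by omega)]
      omega
  have hDle : ∀ a b, a ≤ l → b ≤ l → D (p a) (p b) → b ≤ a + 1 := by
    intro a b ha hb hab
    have := hBFS.no_forward _ _ hab
    rw [hd a ha, hd b hb] at this
    omega
  have hcons : ∀ a b, a ≤ l → b ≤ l → F (p a) (p b) → b ≤ a + 1 :=
    fun a b ha hb h => hDle a b ha hb (hF1 _ _ h).1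
  -- unique in-neighbour (for any vertex with an in-arc)
  have hup : ∀ u u' v, F u v → F u' v → u = u' := by
    intro u u' v h h'
    have hvP : v ∈ p '' Set.Iic l := (hF1 _ _ h).2.2
    have hvS : v ∉ S := fun hv => hF2 v hv u h
    obtain ⟨w, _, hw⟩ := hF3 v hvP hvS
    rw [hw u h, hw u' h']
  -- acyclicity
  have hacyc : ∀ v, ¬ Relation.TransGen F v v := by
    intro v hv
    obtain ⟨u0, _, hu0⟩ := Relation.TransGen.tail'_iff.mp hv
    have hvP : v ∈ p '' Set.Iic l := (hF1 _ _ hu0).2.2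
    obtain ⟨s, hs, hreach⟩ := hF4 v hvP
    have claim : ∀ w, Relation.ReflTransGen F s w → ¬ Relation.TransGen F w w := by
      intro w hw
      induction hw with
      | refl =>
        intro hc
        obtain ⟨u, _, hu⟩ := Relation.TransGen.tail'_iff.mp hc
        exact hF2 s hs u hu
      | tail h1 h2 ih =>
        intro hc
        obtain ⟨u, hru, hu⟩ := Relation.TransGen.tail'_iff.mp hc
        rw [hup u _ _ hu h2] at hru
        exact ih (Relation.TransGen.head' h2 hru)
    exact claim v hreach hv
  -- comparability of ancestors
  have hcomp : ∀ c a b, Relation.ReflTransGen F a c → Relation.ReflTransGen F b c →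
      Relation.ReflTransGen F a b ∨ Relation.ReflTransGen F b a := by
    intro c a b hac hbc
    induction hbc generalizing a with
    | refl => exact Or.inl hac
    | tail h1 h2 ih =>
      rcases Relation.reflTransGen_iff_eq_or_transGen.mp hac with heq | htg
      · exact Or.inr (heq ▸ (h1.tail h2))
      · obtain ⟨u', hu', harc⟩ := Relation.TransGen.tail'_iff.mp htg
        rw [hup u' _ _ harc h2] at hu'
        exact ih _ hu'
  -- key-vertex unpacking
  have hkey : ∀ i, x ≤ i → i ≤ y → p i ∉ S ∧ (∃ w, F (p i) w) ∧
      ({w | F (p i) w}.ncard ≤ 1) ∧ ∀ u, F u (p i) → {w | F u w}.ncard ≤ 1 := by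
    intro i hxi hiy
    have hk := hnokey i hxi hiy
    simp only [keyVertices, Set.mem_union, not_or] at hk
    obtain ⟨⟨⟨hk1, hk2⟩, hk3⟩, hk4⟩ := hk
    refine ⟨hk1, ?_, ?_, ?_⟩
    · by_contra hno
      push_neg at hno
      exact hk2 ⟨hmemP i (by omega), hno⟩
    · simp only [Set.mem_setOf_eq] at hk3
      omega
    · intro u hu
      by_contra hc
      exact hk4 ⟨u, hu, by omega⟩
  have houtu : ∀ i, x ≤ i → i ≤ y → ∀ w w', F (p i) w → F (p i) w' → w = w' := by
    intro i h1 h2 w w' hw hw'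
    exact (Set.ncard_le_one_iff (Set.toFinite _)).mp (hkey i h1 h2).2.2.1 hw hw'
  -- parent function
  have hparE : ∀ i, ∃ a, x ≤ i → i ≤ y →
      a ≤ l ∧ F (p a) (p i) ∧ (∀ u, F u (p i) → u = p a) ∧ (i < a ∨ (x < i ∧ a = i - 1)) := by
    intro i
    by_cases hi : x ≤ i ∧ i ≤ y
    · obtain ⟨hxi, hiy⟩ := hi
      obtain ⟨u, hu, huniq⟩ := hF3 (p i) (hmemP i (by omega)) (hkey i hxi hiy).1
      obtain ⟨a, hal, hau⟩ := (hF1 _ _ hu).2.1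
      rw [Set.mem_Iic] at hal
      subst hau
      have hcb : i ≤ a + 1 := hcons a i hal (by omega) hu
      have hne : a ≠ i := fun h => hacyc (p i) (Relation.TransGen.single (h ▸ hu))
      have hlast : i < a ∨ (x < i ∧ a = i - 1) := by
        rcases Nat.lt_or_ge i a with h | h
        · exact Or.inl h
        · have ha1 : a = i - 1 := by omega
          right
          refine ⟨?_, ha1⟩
          rcases Nat.lt_or_ge x i with h' | h'
          · exact h'
          · exfalso
            have hix : i = x := by omega
            rw [ha1, hix] at hu
            exact hb1 hu
      exact ⟨a, fun _ _ => ⟨hal, hu, huniq, hlast⟩⟩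
    · exact ⟨0, fun h1 h2 => absurd ⟨h1, h2⟩ hi⟩
  choose π hπ using hparE
  have hπl : ∀ i, x ≤ i → i ≤ y → π i ≤ l := fun i h1 h2 => (hπ i h1 h2).1
  have hπF : ∀ i, x ≤ i → i ≤ y → F (p (π i)) (p i) := fun i h1 h2 => (hπ i h1 h2).2.1
  have hπu : ∀ i, x ≤ i → i ≤ y → ∀ u, F u (p i) → u = p (π i) :=
    fun i h1 h2 => (hπ i h1 h2).2.2.1
  have hπalt : ∀ i, x ≤ i → i ≤ y → (i < π i ∨ (x < i ∧ π i = i - 1)) :=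
    fun i h1 h2 => (hπ i h1 h2).2.2.2
  -- descendants of P'-vertices have index ≤ y
  have hsub : ∀ i v, i ≤ y → Relation.ReflTransGen F (p i) v → ∃ m, m ≤ y ∧ v = p m := by
    intro i v hiy hr
    induction hr with
    | refl => exact ⟨i, hiy, rfl⟩
    | tail h1 h2 ih =>
      obtain ⟨m, hm, rfl⟩ := ih
      obtain ⟨m', hm', hpm'⟩ := (hF1 _ _ h2).2.2
      rw [Set.mem_Iic] at hm'
      rw [← hpm'] at h2 ⊢
      have hle := hcons m m' (by omega) hm' h2
      by_cases hmy : m' = y + 1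
      · exfalso
        have hmm : m = y := by omega
        rw [hmm, hmy] at h2
        exact hb2 h2
      · exact ⟨m', by omega, rfl⟩
  -- well-foundedness
  haveI : IsTrans V (Relation.TransGen F) := ⟨fun a b c h1 h2 => h1.trans h2⟩
  haveI : IsIrrefl V (Relation.TransGen F) := ⟨hacyc⟩
  have wfA : WellFounded (Relation.TransGen F) := Finite.wellFounded_of_trans_of_irrefl _
  haveI : IsTrans V (fun a b => Relation.TransGen F b a) := ⟨fun a b c h1 h2 => h2.trans h1⟩
  haveI : IsIrrefl V (fun a b => Relation.TransGen F b a) := ⟨hacyc⟩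
  have wfD : WellFounded (fun a b : V => Relation.TransGen F b a) :=
    Finite.wellFounded_of_trans_of_irrefl _
  -- main rewiring lemma: every backward-parented vertex of P' is an ancestor of p x
  have hAempty : ∀ z, x ≤ z → z ≤ y → z < π z → Relation.ReflTransGen F (p z) (p x) := by
    by_contra hbad
    push_neg at hbad
    obtain ⟨z0, hz0x, hz0y, hz0π, hz0r⟩ := hbad
    obtain ⟨vb, hvb, hminb⟩ := wfD.has_min
      {v | ∃ z, (x ≤ z ∧ z ≤ y ∧ z < π z ∧ ¬ Relation.ReflTransGen F (p z) (p x)) ∧ v = p z}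
      ⟨p z0, z0, ⟨hz0x, hz0y, hz0π, hz0r⟩, rfl⟩
    obtain ⟨b, ⟨hbx, hby, hbπ, hbr⟩, rfl⟩ := hvb
    have hbgtx : x < b := by
      rcases Nat.lt_or_ge x b with h | h
      · exact h
      · exfalso
        have : b = x := by omega
        rw [this] at hbr
        exact hbr Relation.ReflTransGen.refl
    have hnb : ¬ Relation.ReflTransGen F (p b) (p (b - 1)) := by
      intro hr
      rcases Relation.reflTransGen_iff_eq_or_transGen.mp hr with heq | htg
      · have := hinj' (b-1) b (by omega) (by omega) heq
        omega
      · have claim : ∀ c, c < b → x ≤ c → Relation.TransGen F (p b) (p c) → False := by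
          intro c
          induction c using Nat.strong_induction_on with
          | _ c ih =>
            intro hcb hxc htg'
            have hcy : c ≤ y := by omega
            rcases hπalt c hxc hcy with hgt | ⟨hxc', heq'⟩
            · by_cases hrx : Relation.ReflTransGen F (p c) (p x)
              · exact hbr (htg'.to_reflTransGen.trans hrx)
              · exact hminb (p c) ⟨c, ⟨hxc, hcy, hgt, hrx⟩, rfl⟩ htg'
            · obtain ⟨u, hru, harc⟩ := Relation.TransGen.tail'_iff.mp htg'
              rw [hπu c hxc hcy u harc, heq'] at hru
              rcases Relation.reflTransGen_iff_eq_or_transGen.mp hru with heq2 | htg2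
              · have := hinj' (c-1) b (by omega) (by omega) heq2
                omega
              · exact ih (c-1) (by omega) (by omega) (by omega) htg2
        exact claim (b-1) (by omega) (by omega) htg
    -- rewire: new parent of p b is p (b-1)
    obtain ⟨c0, hc0⟩ := (hkey (b-1) (by omega) (by omega)).2.1
    have hπbl : π b ≤ l := hπl b hbx hby
    have hπbF : F (p (π b)) (p b) := hπF b hbx hby
    have hc0b : c0 ≠ p b := by
      intro h
      rw [h] at hc0
      have h2 := hπu b hbx hby _ hc0
      have := hinj' (b-1) (π b) (by omega) hπbl h2
      omega
    have hπbne : p (π b) ≠ p (b-1) := by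
      intro h
      have := hinj' (π b) (b-1) hπbl (by omega) h
      omega
    have houtπb : ∀ w, F (p (π b)) w → w = p b := by
      intro w hw
      exact (Set.ncard_le_one_iff (Set.toFinite _)).mp
        ((hkey b hbx hby).2.2.2 _ hπbF) hw hπbF
    set F' : V → V → Prop :=
      fun u v => (F u v ∧ ¬(u = p (π b) ∧ v = p b)) ∨ (u = p (b - 1) ∧ v = p b) with hF'def
    have hnewD : D (p (b-1)) (p b) := by
      have hT := hpath (b-1) (by omega)
      have hb1' : b - 1 + 1 = b := by omega
      rw [hb1'] at hT
      exact hBFS.branching.sub _ _ hT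
    have harcnew : F' (p (b-1)) (p b) := Or.inr ⟨rfl, rfl⟩
    have hkeep : ∀ a v, Relation.ReflTransGen F a v → ¬ Relation.ReflTransGen F (p b) v →
        Relation.ReflTransGen F' a v := by
      intro a v h
      induction h with
      | refl => intro _; exact Relation.ReflTransGen.refl
      | tail h1 h2 ih =>
        intro hnv
        have hnu := fun hh => hnv (Relation.ReflTransGen.tail hh h2)
        refine (ih hnu).tail (Or.inl ⟨h2, ?_⟩)
        rintro ⟨_, hv⟩
        refine hnv ?_
        rw [hv]
    have hnice' : NiceForest D l p S F' := by
      refine ⟨?_, ?_, ?_, ?_, ?_, ?_⟩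
      · rintro u v (⟨hf, _⟩ | ⟨rfl, rfl⟩)
        · exact hF1 u v hf
        · exact ⟨hnewD, hmemP (b-1) (by omega), hmemP b (by omega)⟩
      · rintro s hs u (⟨hf, _⟩ | ⟨_, rfl⟩)
        · exact hF2 s hs u hf
        · exact (hkey b hbx hby).1 hs
      · intro v hv hvS
        by_cases hvb : v = p b
        · subst hvb
          refine ⟨p (b-1), harcnew, ?_⟩
          rintro u (⟨hf, hne⟩ | ⟨h, _⟩)
          · exact absurd ⟨hπu b hbx hby u hf, rfl⟩ hne
          · exact h
        · obtain ⟨u, hu, huniq⟩ := hF3 v hv hvS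
          refine ⟨u, Or.inl ⟨hu, fun h => hvb h.2⟩, ?_⟩
          rintro u' (⟨hf, _⟩ | ⟨_, hvb'⟩)
          · exact huniq u' hf
          · exact absurd hvb' hvb
      · intro v hv
        obtain ⟨s, hs, hr⟩ := hF4 v hv
        clear hv
        induction hr with
        | refl => exact ⟨s, hs, Relation.ReflTransGen.refl⟩
        | tail h1 h2 ih =>
          rename_i u w
          by_cases hww : w = p b
          · obtain ⟨s2, hs2, hr2⟩ := hF4 (p (b-1)) (hmemP (b-1) (by omega))
            refine ⟨s2, hs2, ?_⟩
            rw [hww]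
            exact (hkeep _ _ hr2 hnb).tail harcnew
          · obtain ⟨s', hs', hr'⟩ := ih
            exact ⟨s', hs', hr'.tail (Or.inl ⟨h2, fun hh => hww hh.2⟩)⟩
      · intro i j hi hj hij harc
        rcases harc with ⟨hf, hne⟩ | ⟨hu, hv⟩
        · by_cases hpi : p i = p (π b)
          · exfalso
            rw [hpi] at hf
            exact hne ⟨hpi, houtπb _ hf⟩
          · rcases hF5 i j hi hj hij hf with h2le | hdeg1
            · left
              refine le_trans h2le (Set.ncard_le_ncard ?_ (Set.toFinite _))
              intro w hw
              exact Or.inl ⟨hw, fun hh => hpi hh.1⟩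
            · exact Or.inr hdeg1
        · have hi' : i = b - 1 := hinj' i (b-1) hi (by omega) hu
          have hj' : j = b := hinj' j b hj (by omega) hv
          left
          rw [hi']
          have hmem1 : c0 ∈ {w | F' (p (b-1)) w} := Or.inl ⟨hc0, fun hh => hπbne hh.1.symm⟩
          have hmem2 : p b ∈ {w | F' (p (b-1)) w} := harcnew
          have := (Set.one_lt_ncard_iff (Set.toFinite _)).mpr ⟨c0, p b, hmem1, hmem2, hc0b⟩
          omega
      · intro i j hi hj hji harc q hq1 hq2
        rcases harc with ⟨hf, _⟩ | ⟨hu, hv⟩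
        · exact hF6 i j hi hj hji hf q hq1 hq2
        · have hi' : i = b - 1 := hinj' i (b-1) hi (by omega) hu
          have hj' : j = b := hinj' j b hj (by omega) hv
          omega
    have hsub1 : treeLeaves F (p '' Set.Iic l) ⊆ treeLeaves F' (p '' Set.Iic l) := by
      rintro v ⟨hvP, hvleaf⟩
      refine ⟨hvP, ?_⟩
      rintro w (⟨hf, _⟩ | ⟨hvb1, _⟩)
      · exact hvleaf w hf
      · exact hvleaf c0 (by rw [hvb1]; exact hc0)
    have hπbL' : p (π b) ∈ treeLeaves F' (p '' Set.Iic l) := by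
      refine ⟨hmemP (π b) hπbl, ?_⟩
      rintro w (⟨hf, hne⟩ | ⟨heq, _⟩)
      · exact hne ⟨rfl, houtπb w hf⟩
      · exact hπbne heq
    have hπbnL : p (π b) ∉ treeLeaves F (p '' Set.Iic l) := by
      rintro ⟨_, hl⟩
      exact hl (p b) hπbF
    have hssub : treeLeaves F (p '' Set.Iic l) ⊂ treeLeaves F' (p '' Set.Iic l) :=
      ⟨hsub1, fun hsup => hπbnL (hsup hπbL')⟩
    have hlt := Set.ncard_lt_ncard hssub (Set.toFinite _)
    have := hmax F' hnice'
    omega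
  -- at most one start
  have hcase : ∀ a a', x ≤ a → a ≤ y → y < π a → x ≤ a' → a' ≤ y → y < π a' →
      a ≠ a' → Relation.ReflTransGen F (p a) (p a') → False := by
    intro a a' hax hay haπ hax' hay' haπ' hne hr
    rcases Relation.reflTransGen_iff_eq_or_transGen.mp hr with heq | htg
    · exact hne (hinj' a a' (by omega) (by omega) heq.symm)
    · obtain ⟨u, hru, harc⟩ := Relation.TransGen.tail'_iff.mp htg
      rw [hπu a' hax' hay' u harc] at hru
      obtain ⟨m, hm, hpm⟩ := hsub a _ hay hru
      have := hinj' (π a') m (hπl a' hax' hay') (by omega) hpm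
      omega
  have hone : ∀ a a', (x ≤ a ∧ a ≤ y ∧ y < π a) → (x ≤ a' ∧ a' ≤ y ∧ y < π a') → a = a' := by
    rintro a a' ⟨h1, h2, h3⟩ ⟨h4, h5, h6⟩
    by_contra hne
    have hra : Relation.ReflTransGen F (p a) (p x) := hAempty a h1 h2 (by omega)
    have hra' : Relation.ReflTransGen F (p a') (p x) := hAempty a' h4 h5 (by omega)
    rcases hcomp (p x) (p a) (p a') hra hra' with h | h
    · exact hcase a a' h1 h2 h3 h4 h5 h6 hne h
    · exact hcase a' a h4 h5 h6 h1 h2 h3 (Ne.symm hne) h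
  -- existence of a start
  have hex : ∃ s, x ≤ s ∧ s ≤ y ∧ y < π s := by
    obtain ⟨v, hv, hminv⟩ := wfA.has_min {v | ∃ i, x ≤ i ∧ i ≤ y ∧ v = p i}
      ⟨p x, x, le_rfl, hxy, rfl⟩
    obtain ⟨i, hix, hiy, rfl⟩ := hv
    rcases hπalt i hix hiy with hgt | ⟨hgt, heq⟩
    · refine ⟨i, hix, hiy, ?_⟩
      by_contra hle
      exact hminv (p (π i)) ⟨π i, by omega, by omega, rfl⟩
        (Relation.TransGen.single (hπF i hix hiy))
    · exfalso
      exact hminv (p (i-1)) ⟨i-1, by omega, by omega, rfl⟩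
        (Relation.TransGen.single (by rw [← heq]; exact hπF i hix hiy))
  obtain ⟨s0, hs0x, hs0y, hs0π⟩ := hex
  -- child function and iteration
  have hchE : ∀ v : V, ∃ w, (∃ u, F v u) → F v w := by
    intro v
    by_cases h : ∃ u, F v u
    · obtain ⟨u, hu⟩ := h
      exact ⟨u, fun _ => hu⟩
    · exact ⟨v, fun hh => absurd hh h⟩
  choose chV hchV using hchE
  set g : ℕ → V := fun n => chV^[n] (p s0) with hgdef
  have hgzero : g 0 = p s0 := rfl
  have hgsucc : ∀ n, g (n+1) = chV (g n) := fun n => Function.iterate_succ_apply' chV n (p s0)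
  have hchP : ∀ i, x ≤ i → i ≤ y → F (p i) (chV (p i)) := fun i h1 h2 => hchV (p i) (hkey i h1 h2).2.1
  have hchU : ∀ i, x ≤ i → i ≤ y → ∀ w, F (p i) w → w = chV (p i) :=
    fun i h1 h2 w hw => houtu i h1 h2 w _ hw (hchP i h1 h2)
  -- every vertex of P' is reached by the iteration with P'-prefix
  have E1 : ∀ v : V, ∀ i, x ≤ i → i ≤ y → v = p i →
      ∃ n, g n = p i ∧ ∀ j, j ≤ n → ∃ m, x ≤ m ∧ m ≤ y ∧ g j = p m := by
    intro v
    refine wfA.induction (C := fun v => ∀ i, x ≤ i → i ≤ y → v = p i →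
      ∃ n, g n = p i ∧ ∀ j, j ≤ n → ∃ m, x ≤ m ∧ m ≤ y ∧ g j = p m) v ?_
    intro v ih i hix hiy hv
    by_cases his : i = s0
    · refine ⟨0, by rw [his]; exact hgzero, ?_⟩
      intro j hj
      have : j = 0 := by omega
      rw [this]
      exact ⟨s0, hs0x, hs0y, hgzero⟩
    · have hπin : x ≤ π i ∧ π i ≤ y := by
        rcases hπalt i hix hiy with hgt | ⟨hgt, heq⟩
        · constructor
          · omega
          · by_contra hgty
            exact his (hone i s0 ⟨hix, hiy, by omega⟩ ⟨hs0x, hs0y, hs0π⟩)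
        · omega
      obtain ⟨n, hn1, hn2⟩ := ih (p (π i))
        (by rw [hv]; exact Relation.TransGen.single (hπF i hix hiy)) (π i) hπin.1 hπin.2 rfl
      have hstep : g (n+1) = p i := by
        rw [hgsucc, hn1]
        exact (hchU (π i) hπin.1 hπin.2 (p i) (hπF i hix hiy)).symm
      refine ⟨n+1, hstep, ?_⟩
      intro j hj
      rcases Nat.lt_or_ge j (n+1) with h | h
      · exact hn2 j (by omega)
      · have : j = n + 1 := by omega
        rw [this, hstep]
        exact ⟨i, hix, hiy, rfl⟩
  have hstepF : ∀ j, (∃ m, x ≤ m ∧ m ≤ y ∧ g j = p m) → F (g j) (g (j+1)) := by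
    rintro j ⟨m, h1, h2, hm⟩
    rw [hgsucc, hm]
    exact hchP m h1 h2
  have E2 : ∀ n m', n < m' → (∀ j, j < m' → ∃ mm, x ≤ mm ∧ mm ≤ y ∧ g j = p mm) →
      g n = g m' → False := by
    intro n m' hnm hpre hgeq
    have htg : ∀ d n0, 0 < d → (∀ j, j < n0 + d → ∃ mm, x ≤ mm ∧ mm ≤ y ∧ g j = p mm) →
        Relation.TransGen F (g n0) (g (n0 + d)) := by
      intro d
      induction d with
      | zero => intro n0 hd _; exact absurd hd (lt_irrefl 0)
      | succ d ihd =>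
        intro n0 hd hpre'
        rcases Nat.eq_zero_or_pos d with rfl | hd0
        · exact Relation.TransGen.single (hstepF n0 (hpre' n0 (by omega)))
        · exact (ihd n0 hd0 (fun j hj => hpre' j (by omega))).tail
            (hstepF (n0+d) (hpre' (n0+d) (by omega)))
    have h := htg (m' - n) n (by omega) (fun j hj => hpre j (by omega))
    rw [show n + (m' - n) = m' by omega, ← hgeq] at h
    exact hacyc _ h
  -- the "time" function ν
  have E1' : ∀ i, ∃ n, (x ≤ i ∧ i ≤ y) →
      (g n = p i ∧ ∀ j, j ≤ n → ∃ m, x ≤ m ∧ m ≤ y ∧ g j = p m) := by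
    intro i
    by_cases h : x ≤ i ∧ i ≤ y
    · obtain ⟨n, h1, h2⟩ := E1 (p i) i h.1 h.2 rfl
      exact ⟨n, fun _ => ⟨h1, h2⟩⟩
    · exact ⟨0, fun hh => absurd hh h⟩
  choose ν hν using E1'
  have hνg : ∀ i, x ≤ i → i ≤ y → g (ν i) = p i := fun i h1 h2 => (hν i ⟨h1, h2⟩).1
  have hνpre : ∀ i, x ≤ i → i ≤ y → ∀ j, j ≤ ν i → ∃ m, x ≤ m ∧ m ≤ y ∧ g j = p m :=
    fun i h1 h2 => (hν i ⟨h1, h2⟩).2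
  have hνuniq : ∀ i, x ≤ i → i ≤ y → ∀ n, g n = p i →
      (∀ j, j ≤ n → ∃ m, x ≤ m ∧ m ≤ y ∧ g j = p m) → n = ν i := by
    intro i h1 h2 n hn hpre
    by_contra hne
    rcases Nat.lt_or_ge n (ν i) with h | h
    · exact E2 n (ν i) h (fun j hj => hνpre i h1 h2 j (by omega)) (by rw [hn, hνg i h1 h2])
    · exact E2 (ν i) n (by omega) (fun j hj => hpre j (by omega))
        (by rw [hn, hνg i h1 h2])
  set A : Finset ℕ := (Finset.Icc x y).image ν with hAdef
  have hcardA : A.card = y - x + 1 := by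
    rw [hAdef, Finset.card_image_of_injOn, Nat.card_Icc]
    · omega
    · intro a ha b hb hab
      simp only [Finset.coe_Icc, Set.mem_Icc] at ha hb
      have h1 := hνg a ha.1 ha.2
      have h2 := hνg b hb.1 hb.2
      rw [hab, h2] at h1
      exact (hinj' b a (by omega) (by omega) h1).symm
  have hmemA : ∀ j, j ∈ A → ∃ i, x ≤ i ∧ i ≤ y ∧ ν i = j ∧ g j = p i := by
    intro j hj
    rw [hAdef] at hj
    obtain ⟨i, hi, hji⟩ := Finset.mem_image.mp hj
    simp only [Finset.mem_Icc] at hi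
    exact ⟨i, hi.1, hi.2, hji, by rw [← hji]; exact hνg i hi.1 hi.2⟩
  have hdc : ∀ a ∈ A, ∀ j, j ≤ a → j ∈ A := by
    intro a ha j hj
    obtain ⟨i, h1, h2, h3, _⟩ := hmemA a ha
    obtain ⟨m, hm1, hm2, hm3⟩ := hνpre i h1 h2 j (by omega)
    have hjm : j = ν m := hνuniq m hm1 hm2 j hm3 (fun j' hj' => hνpre i h1 h2 j' (by omega))
    rw [hAdef]
    exact Finset.mem_image.mpr ⟨m, Finset.mem_Icc.mpr ⟨hm1, hm2⟩, hjm.symm⟩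
  have hArange : A = Finset.range (y - x + 1) := by
    apply Finset.eq_of_subset_of_card_le
    · intro a ha
      rw [Finset.mem_range]
      by_contra hle
      have hsubA : Finset.Iic a ⊆ A := fun j hj => hdc a ha j (Finset.mem_Iic.mp hj)
      have := Finset.card_le_card hsubA
      rw [Nat.card_Iic] at this
      omega
    · rw [hcardA, Finset.card_range]
  have hmemrange : ∀ j, j ≤ y - x → ∃ i, x ≤ i ∧ i ≤ y ∧ ν i = j ∧ g j = p i := by
    intro j hj
    exact hmemA j (by rw [hArange]; exact Finset.mem_range.mpr (by omega))
  have hνle : ∀ i, x ≤ i → i ≤ y → ν i ≤ y - x := by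
    intro i h1 h2
    have : ν i ∈ A := by
      rw [hAdef]
      exact Finset.mem_image.mpr ⟨i, Finset.mem_Icc.mpr ⟨h1, h2⟩, rfl⟩
    rw [hArange, Finset.mem_range] at this
    omega
  have hpreAll : ∀ j, j ≤ y - x → ∃ m, x ≤ m ∧ m ≤ y ∧ g j = p m := by
    intro j hj
    obtain ⟨i, h1, h2, _, h4⟩ := hmemrange j hj
    exact ⟨i, h1, h2, h4⟩
  refine ⟨g, ?_, ?_, ?_⟩
  · intro a ha b hb hab
    rw [Set.mem_Iic] at ha hb
    by_contra hne
    rcases Nat.lt_or_ge a b with h | h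
    · exact E2 a b h (fun j hj => hpreAll j (by omega)) hab
    · exact E2 b a (by omega) (fun j hj => hpreAll j (by omega)) hab.symm
  · ext v
    simp only [Set.mem_image, Set.mem_Iic, Set.mem_Icc]
    constructor
    · rintro ⟨n, hn, rfl⟩
      obtain ⟨i, h1, h2, _, h4⟩ := hmemrange n hn
      exact ⟨i, ⟨h1, h2⟩, h4.symm⟩
    · rintro ⟨i, ⟨h1, h2⟩, rfl⟩
      exact ⟨ν i, hνle i h1 h2, hνg i h1 h2⟩
  · intro a b'
    constructor
    · rintro ⟨hab, ⟨ma, hma, rfl⟩, ⟨mb, hmb, rfl⟩⟩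
      rw [Set.mem_Icc] at hma hmb
      have hna := hνg ma hma.1 hma.2
      have hchb : p mb = chV (p ma) := hchU ma hma.1 hma.2 _ hab
      have hsucc : g (ν ma + 1) = p mb := by rw [hgsucc, hna, ← hchb]
      have hlt : ν ma < y - x := by
        rcases Nat.lt_or_ge (ν ma) (y - x) with h | h
        · exact h
        · exfalso
          have hieq : ν ma = y - x := by
            have := hνle ma hma.1 hma.2
            omega
          have h2 : g (y - x + 1) = p mb := by rw [← hieq]; exact hsucc
          exact E2 (ν mb) (y - x + 1)
            (by have := hνle mb hmb.1 hmb.2; omega)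
            (fun j hj => hpreAll j (by omega))
            ((hνg mb hmb.1 hmb.2).trans h2.symm)
      exact ⟨ν ma, hlt, hna.symm, hsucc.symm⟩
    · rintro ⟨i, hi, rfl, rfl⟩
      obtain ⟨mi, h1, h2, _, h4⟩ := hmemrange i (by omega)
      obtain ⟨mj, h5, h6, _, h8⟩ := hmemrange (i+1) (by omega)
      refine ⟨?_, ⟨mi, Set.mem_Icc.mpr ⟨h1, h2⟩, h4.symm⟩, ⟨mj, Set.mem_Icc.mpr ⟨h5, h6⟩, h8.symm⟩⟩
      rw [hgsucc, h4]
      exact hchP mi h1 h2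
end

section
/- In the setting of a reduced no-instance with nice forest F of maximum number of leaves and key-vertex-free subpath P' = p_x...p_y of P (with boundary arcs not in F): for any two vertices p_i, p_j in V(P') with i <= j - 2, the vertex p_j appears before p_i on the directed path Q' = F[V(P')]. -/
universe u

variable {V : Type u}

private lemma mem_zip_tail_iff {a b : V} : ∀ (q : List V),
    (a, b) ∈ q.zip q.tail ↔ ∃ l1 l2, q = l1 ++ a :: b :: l2 := by
  intro q
  induction q with
  | nil => simp
  | cons c rest ih =>
    cases rest with
    | nil =>
      simp only [List.tail_cons, List.zip_nil_right, List.not_mem_nil, false_iff]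
      rintro ⟨l1, l2, h⟩
      rcases l1 with _ | ⟨d, l1⟩ <;> simp_all
    | cons c' rest' =>
      simp only [List.tail_cons, List.zip_cons_cons, List.mem_cons, Prod.mk.injEq] at *
      constructor
      · rintro (⟨rfl, rfl⟩ | h)
        · exact ⟨[], rest', rfl⟩
        · obtain ⟨l1, l2, h⟩ := ih.1 h
          exact ⟨c :: l1, l2, by simp [h]⟩
      · rintro ⟨l1, l2, h⟩
        rcases l1 with _ | ⟨d, l1⟩
        · simp at h; exact Or.inl ⟨h.1.symm, h.2.1.symm⟩
        · simp at h
          exact Or.inr (ih.2 ⟨l1, l2, h.2⟩)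

private lemma chain_last (D : V → V → Prop) : ∀ (q : List V) (a b : V),
    q.head? = some a → q.getLast? = some b → q.Chain' D →
    a = b ∨ ∃ u, D u b ∧ (u, b) ∈ q.zip q.tail := by
  intro q
  induction q with
  | nil => simp
  | cons c rest ih =>
    intro a b ha hb hc
    cases rest with
    | nil =>
      simp at ha hb
      exact Or.inl (ha.symm.trans hb)
    | cons c' rest' =>
      simp only [List.head?_cons, Option.some.injEq] at ha
      subst ha
      rw [List.getLast?_cons_cons] at hb
      change List.IsChain D _ at hc
      rw [List.isChain_cons_cons] at hc
      rcases ih c' b rfl hb hc.2 with h | ⟨u, hu, hmem⟩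
      · refine Or.inr ⟨c, ?_, ?_⟩
        · rw [← h]; exact hc.1
        · simp [← h]
      · exact Or.inr ⟨u, hu, by simp [List.mem_cons]; right; simpa using hmem⟩

private lemma walk_arc (D : V → V → Prop) (r u w : V) (hw : w ≠ r)
    (hu : ∀ u', D u' w → u' = u) :
    ∀ q, IsWalk D r w q → (u, w) ∈ q.zip q.tail := by
  rintro q ⟨hne, hh, hl, hc⟩
  rcases chain_last D q r w hh hl hc with h | ⟨u', hu', hmem⟩
  · exact absurd h.symm hw
  · rwa [hu u' hu'] at hmem

private lemma walk_arc2 (D : V → V → Prop) (r u v w : V) (hv : v ≠ r)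
    (hvu : ∀ u', D u' v → u' = u) (hw : w ≠ r) (hwv : ∀ u', D u' w → u' = v) :
    ArcDisconnects D r u v w := by
  intro q hq
  have h1 := walk_arc D r v w hw hwv q hq
  obtain ⟨l1, l2, rfl⟩ := (mem_zip_tail_iff _).1 h1
  have hq1 : IsWalk D r v (l1 ++ [v]) := by
    obtain ⟨hne, hh, hl, hc⟩ := hq
    refine ⟨by simp, ?_, by simp, ?_⟩
    · rw [show l1 ++ v :: w :: l2 = (l1 ++ [v]) ++ (w :: l2) by simp] at hh
      rcases l1 with _ | ⟨d, l1⟩ <;> simpa using hh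
    · rw [show l1 ++ v :: w :: l2 = (l1 ++ [v]) ++ (w :: l2) by simp] at hc
      exact (List.isChain_append.1 hc).1
  have h2 := walk_arc D r u v hv hvu _ hq1
  obtain ⟨l1', l2', h⟩ := (mem_zip_tail_iff _).1 h2
  refine (mem_zip_tail_iff _).2 ⟨l1', l2' ++ w :: l2, ?_⟩
  have : l1 ++ v :: w :: l2 = (l1 ++ [v]) ++ (w :: l2) := by simp
  rw [this, h]; simp




theorem stmt10 [Fintype V] (D T : V → V → Prop) (r : V) (depth : V → ℕ) (k : ℕ)
    (hred : Reduced D r)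
    (hno : ¬ HasOutBranchingWithLeaves D r k)
    (hBFS : IsBFSTree D r T depth)
    (l : ℕ) (p : ℕ → V) (hinj : Set.InjOn p (Set.Iic l))
    (hpath : ∀ i, i < l → T (p i) (p (i + 1)))
    (hdeg : ∀ i, i ≤ l → ∃! w, T (p i) w)
    (S : Set V)
    (hS : S = {v ∈ p '' Set.Iio l | ∃ u, u ∉ p '' Set.Iic l ∧ D u v})
    (F : V → V → Prop) (hF : NiceForest D l p S F)
    (hmax : ∀ F' : V → V → Prop, NiceForest D l p S F' →
      (treeLeaves F' (p '' Set.Iic l)).ncard ≤ (treeLeaves F (p '' Set.Iic l)).ncard)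
    (x y : ℕ) (hx : 1 ≤ x) (hxy : x ≤ y) (hy : y < l)
    (hnokey : ∀ i, x ≤ i → i ≤ y → p i ∉ keyVertices l p S F)
    (hb1 : ¬ F (p (x - 1)) (p x)) (hb2 : ¬ F (p y) (p (y + 1)))
    (qf : ℕ → V) (hqinj : Set.InjOn qf (Set.Iic (y - x)))
    (hqim : qf '' Set.Iic (y - x) = p '' Set.Icc x y)
    (hqarc : ∀ a b, (F a b ∧ a ∈ p '' Set.Icc x y ∧ b ∈ p '' Set.Icc x y) ↔
      ∃ i, i < y - x ∧ a = qf i ∧ b = qf (i + 1)) :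
    ∀ i j a b, x ≤ i → i + 2 ≤ j → j ≤ y → a ≤ y - x → b ≤ y - x →
      qf a = p j → qf b = p i → a < b := by
  intro i j a b hxi hij hjy ha hb hqa hqb
  classical
  have hil : i ≤ l := by omega
  have hjl : j ≤ l := by omega
  have hDsub : ∀ a b, F a b → D a b := fun a b h => ((hF.1) a b h).1
  have hTD : ∀ a b, T a b → D a b := hBFS.branching.sub
  have hner : ∀ m, 1 ≤ m → m ≤ l → p m ≠ r := by
    intro m h1 h2 heq
    have ht := hpath (m-1) (by omega)
    rw [show m - 1 + 1 = m by omega] at ht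
    have := hBFS.level _ _ ht
    rw [heq, hBFS.root_level] at this
    omega
  have houtd : ∀ s, x ≤ s → s ≤ y → ¬ 2 ≤ {w | F (p s) w}.ncard := by
    intro s h1 h2 hge
    refine hnokey s h1 h2 ?_
    unfold keyVertices
    exact Set.mem_union_left _ (Set.mem_union_right _ hge)
  have hfwd : ∀ s t, x ≤ s → s ≤ y → t ≤ y → s < t → F (p s) (p t) →
      t = s + 1 ∧ ∀ u, D u (p t) → u = p s := by
    intro s t hs1 hs2 ht2 hst hFst
    have h5 := hF.2.2.2.2.1 s t (by omega) (by omega) hst hFst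
    rcases h5 with h2 | h1
    · exact absurd h2 (houtd s hs1 hs2)
    · obtain ⟨u0, hu0⟩ := Set.ncard_eq_one.1 h1
      have hmem : ∀ u, D u (p t) → u = u0 := by
        intro u hu
        have h' : u ∈ {u | D u (p t)} := hu
        rw [hu0] at h'; exact h'
      have hT : D (p (t-1)) (p t) := by
        have h' := hpath (t-1) (by omega)
        rw [show t - 1 + 1 = t by omega] at h'
        exact hTD _ _ h'
      have e1 : p (t-1) = u0 := hmem _ hT
      have e2 : p s = u0 := hmem _ (hDsub _ _ hFst)
      have hst' : s = t - 1 :=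
        hinj (Set.mem_Iic.2 (by omega)) (Set.mem_Iic.2 (by omega)) (e2.trans e1.symm)
      refine ⟨by omega, fun u hu => ?_⟩
      rw [hmem u hu, ← e2]
  have hnoconsec : ∀ s, x ≤ s → s + 2 ≤ y → F (p s) (p (s+1)) → F (p (s+1)) (p (s+2)) → False := by
    intro s h1 h2 hF1 hF2
    have hu1 := (hfwd s (s+1) h1 (by omega) (by omega) (by omega) hF1).2
    have hu2 := (hfwd (s+1) (s+2) (by omega) (by omega) (by omega) (by omega) hF2).2
    have hd1 : ArcDisconnects D r (p s) (p (s+1)) (p (s+1)) := fun q hq =>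
      walk_arc D r (p s) (p (s+1)) (hner (s+1) (by omega) (by omega)) hu1 q hq
    have hd2 : ArcDisconnects D r (p s) (p (s+1)) (p (s+2)) :=
      walk_arc2 D r (p s) (p (s+1)) (p (s+2)) (hner (s+1) (by omega) (by omega)) hu1
        (hner (s+2) (by omega) (by omega)) hu2
    refine hred.rule3 (p s) (p (s+1)) (p (s+1)) (p (s+2)) (hDsub _ _ hF1) ?_ hd1 hd2
    intro h
    have := hinj (Set.mem_Iic.2 (by omega)) (Set.mem_Iic.2 (by omega)) h
    omega
  have hgex : ∀ c, c ≤ y - x → ∃ m, x ≤ m ∧ m ≤ y ∧ qf c = p m := by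
    intro c hc
    have h' : qf c ∈ p '' Set.Icc x y := by
      rw [← hqim]; exact ⟨c, Set.mem_Iic.2 hc, rfl⟩
    obtain ⟨m, hm, hpm⟩ := h'
    exact ⟨m, hm.1, hm.2, hpm.symm⟩
  choose g hg1 hg2 hg3 using hgex
  set G : ℕ → ℕ := fun c => if h : c ≤ y - x then g c h else 0 with hGdef
  have hGx : ∀ c, c ≤ y - x → x ≤ G c := by
    intro c hc; simp only [hGdef, dif_pos hc]; exact hg1 c hc
  have hGy : ∀ c, c ≤ y - x → G c ≤ y := by
    intro c hc; simp only [hGdef, dif_pos hc]; exact hg2 c hc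
  have hGq : ∀ c, c ≤ y - x → qf c = p (G c) := by
    intro c hc; simp only [hGdef, dif_pos hc]; exact hg3 c hc
  have hGb : G b = i := by
    refine hinj (Set.mem_Iic.2 (by have := hGy b hb; omega)) (Set.mem_Iic.2 hil) ?_
    rw [← hGq b hb, hqb]
  have hGa : G a = j := by
    refine hinj (Set.mem_Iic.2 (by have := hGy a ha; omega)) (Set.mem_Iic.2 hjl) ?_
    rw [← hGq a ha, hqa]
  have harc : ∀ c, c < y - x → F (qf c) (qf (c+1)) :=
    fun c hc => ((hqarc (qf c) (qf (c+1))).2 ⟨c, hc, rfl, rfl⟩).1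
  have hdich : ∀ c, c < y - x →
      (G (c+1) = G c + 1 ∧ F (p (G c)) (p (G c + 1))) ∨ G (c+1) < G c := by
    intro c hc
    have hc1 : c ≤ y - x := le_of_lt hc
    have hc2 : c + 1 ≤ y - x := hc
    have hFc : F (p (G c)) (p (G (c+1))) := by
      rw [← hGq c hc1, ← hGq (c+1) hc2]; exact harc c hc
    have hne : G c ≠ G (c+1) := by
      intro h
      have : qf c = qf (c+1) := by rw [hGq c hc1, hGq (c+1) hc2, h]
      have := hqinj (Set.mem_Iic.2 hc1) (Set.mem_Iic.2 hc2) this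
      omega
    rcases lt_or_gt_of_ne hne with h | h
    · left
      have he := (hfwd (G c) (G (c+1)) (hGx c hc1) (hGy c hc1) (hGy (c+1) hc2) h hFc).1
      refine ⟨he, ?_⟩
      rw [← he]; exact hFc
    · exact Or.inr h
  by_contra hab
  push_neg at hab
  have hba : b < a := by
    rcases Nat.lt_or_ge b a with h | h
    · exact h
    · exfalso
      have hab' : a = b := by omega
      rw [hab', hqb] at hqa
      have := hinj (Set.mem_Iic.2 hil) (Set.mem_Iic.2 hjl) hqa
      omega
  have hex : ∃ d, b < d ∧ d ≤ a ∧ i + 2 ≤ G d := ⟨a, hba, le_refl a, by rw [hGa]; omega⟩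
  have hdspec := Nat.find_spec hex
  set d := Nat.find hex with hddef
  obtain ⟨hbd, hda, hGd⟩ := hdspec
  have hdyx : d ≤ y - x := le_trans hda ha
  rcases Nat.lt_or_ge d (b+2) with hcase | hcase
  · -- d = b + 1
    have hdb : d = b + 1 := by omega
    rw [hdb] at hGd
    rcases hdich b (by omega) with ⟨h1, _⟩ | h1
    · rw [hGb] at h1; omega
    · rw [hGb] at h1; omega
  · -- d ≥ b + 2
    have hnd1 : G (d-1) < i + 2 := by
      by_contra h
      push_neg at h
      exact Nat.find_min hex (show d - 1 < d by omega) ⟨by omega, by omega, h⟩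
    rcases hdich (d-1) (by omega) with ⟨h1, hF1⟩ | h1
    · rw [show d - 1 + 1 = d by omega] at h1
      -- G (d-1) = i+1, G d = i+2
      have hG1 : G (d-1) = i + 1 := by omega
      have hGd2 : G d = i + 2 := by omega
      have hnd2 : G (d-2) < i + 2 := by
        rcases Nat.lt_or_ge b (d-2) with h' | h'
        · by_contra h
          push_neg at h
          exact Nat.find_min hex (show d - 2 < d by omega) ⟨h', by omega, h⟩
        · have hb2 : d - 2 = b := by omega
          rw [hb2, hGb]; omega
      rcases hdich (d-2) (by omega) with ⟨h2, hF2⟩ | h2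
      · rw [show d - 2 + 1 = d - 1 by omega] at h2
        have hG2 : G (d-2) = i := by omega
        rw [hG2] at hF2
        rw [hG1] at hF1
        have hiy : i + 2 ≤ y := by
          have := hGy d hdyx; omega
        exact hnoconsec i hxi hiy hF2 (by rw [show i + 1 + 1 = i + 2 from rfl] at hF1; exact hF1)
      · rw [show d - 2 + 1 = d - 1 by omega] at h2
        omega
    · rw [show d - 1 + 1 = d by omega] at h1
      omega
end

section
/- In the setting of a reduced no-instance with nice forest F of maximum number of leaves and key-vertex-free subpath P' of P with |P'| >= 3: exactly 2 vertices of P' are heads of arcs of D whose tails lie outside P', namely p_x and the first vertex of the directed path Q' = F[V(P')]. -/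
universe u

variable {V : Type u}

theorem stmt11 [Fintype V] (D T : V → V → Prop) (r : V) (depth : V → ℕ) (k : ℕ)
    (hred : Reduced D r)
    (hno : ¬ HasOutBranchingWithLeaves D r k)
    (hBFS : IsBFSTree D r T depth)
    (l : ℕ) (p : ℕ → V) (hinj : Set.InjOn p (Set.Iic l))
    (hpath : ∀ i, i < l → T (p i) (p (i + 1)))
    (hdeg : ∀ i, i ≤ l → ∃! w, T (p i) w)
    (S : Set V)
    (hS : S = {v ∈ p '' Set.Iio l | ∃ u, u ∉ p '' Set.Iic l ∧ D u v})
    (F : V → V → Prop) (hF : NiceForest D l p S F)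
    (hmax : ∀ F' : V → V → Prop, NiceForest D l p S F' →
      (treeLeaves F' (p '' Set.Iic l)).ncard ≤ (treeLeaves F (p '' Set.Iic l)).ncard)
    (x y : ℕ) (hx : 1 ≤ x) (hxy : x ≤ y) (hy : y < l)
    (hnokey : ∀ i, x ≤ i → i ≤ y → p i ∉ keyVertices l p S F)
    (hb1 : ¬ F (p (x - 1)) (p x)) (hb2 : ¬ F (p y) (p (y + 1)))
    (qf : ℕ → V) (hqinj : Set.InjOn qf (Set.Iic (y - x)))
    (hqim : qf '' Set.Iic (y - x) = p '' Set.Icc x y)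
    (hqarc : ∀ a b, (F a b ∧ a ∈ p '' Set.Icc x y ∧ b ∈ p '' Set.Icc x y) ↔
      ∃ i, i < y - x ∧ a = qf i ∧ b = qf (i + 1))
    (hlen : x + 2 ≤ y) :
    {v ∈ p '' Set.Icc x y | ∃ u, u ∉ p '' Set.Icc x y ∧ D u v} = {p x, qf 0} ∧
    p x ≠ qf 0 := by
  classical
  have hpinj : ∀ a b : ℕ, a ≤ l → b ≤ l → p a = p b → a = b := by
    intro a b ha hb h
    exact hinj ha hb h
  have hdepth : ∀ i, i ≤ l → depth (p i) = depth (p 0) + i := by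
    intro i
    induction i with
    | zero => intro _; simp
    | succ n ih =>
      intro h
      have h1 : depth (p (n + 1)) = depth (p n) + 1 :=
        hBFS.level _ _ (hpath n (by omega))
      rw [h1, ih (by omega)]
      omega
  have hnf : ∀ a b : ℕ, a ≤ l → b ≤ l → D (p a) (p b) → b ≤ a + 1 := by
    intro a b ha hb h
    have h2 := hBFS.no_forward _ _ h
    rw [hdepth a ha, hdepth b hb] at h2
    omega
  have hnS : ∀ i, x ≤ i → i ≤ y → p i ∉ S := by
    intro i h1 h2 hi
    exact hnokey i h1 h2
      (Set.mem_union_left _ (Set.mem_union_left _ (Set.mem_union_left _ hi)))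
  have hdeg1 : ∀ i, x ≤ i → i ≤ y → ¬ (2 ≤ {w | F (p i) w}.ncard) := by
    intro i h1 h2 hi
    exact hnokey i h1 h2 (Set.mem_union_left _ (Set.mem_union_right _ hi))
  have hqmem : ∀ m, m ≤ y - x → qf m ∈ p '' Set.Icc x y := by
    intro m hm
    rw [← hqim]
    exact ⟨m, hm, rfl⟩
  have hparent : ∀ b, x ≤ b → b ≤ y → ∃! u, F u (p b) := by
    intro b h1 h2
    exact hF.2.2.1 (p b) ⟨b, Set.mem_Iic.mpr (by omega), rfl⟩ (hnS b h1 h2)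
  have hFD : ∀ a b, F a b → D a b := fun a b h => (hF.1 a b h).1
  have hone : ∀ (v a b : V), {u | D u v}.ncard = 1 → D a v → D b v → a = b := by
    intro v a b hcard ha hb
    by_contra hne
    have h2 : 1 < {u | D u v}.ncard :=
      (Set.one_lt_ncard (Set.toFinite _)).mpr ⟨a, ha, b, hb, hne⟩
    omega
  -- `qf 0` receives an arc from outside `P'`.
  have hq0in : ∃ u, u ∉ p '' Set.Icc x y ∧ D u (qf 0) := by
    obtain ⟨i0, hi0, hpi0⟩ := hqmem 0 (Nat.zero_le _)
    obtain ⟨u, huF, -⟩ := hparent i0 hi0.1 hi0.2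
    refine ⟨u, ?_, ?_⟩
    · intro humem
      obtain ⟨i, hi, -, heq⟩ := (hqarc u (p i0)).mp ⟨huF, humem, ⟨i0, hi0, rfl⟩⟩
      rw [hpi0] at heq
      have h0 : (0 : ℕ) = i + 1 :=
        hqinj (Set.mem_Iic.mpr (Nat.zero_le _)) (Set.mem_Iic.mpr (by omega)) heq
      omega
    · rw [← hpi0]
      exact hFD u _ huF
  -- `p x` receives an arc from outside `P'`.
  have hpxin : ∃ u, u ∉ p '' Set.Icc x y ∧ D u (p x) := by
    refine ⟨p (x - 1), ?_, ?_⟩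
    · rintro ⟨c, hc, hcp⟩
      have hc1 : x ≤ c := hc.1
      have hc2 : c ≤ y := hc.2
      have : c = x - 1 := hpinj c (x - 1) (by omega) (by omega) hcp
      omega
    · have hT : T (p (x - 1)) (p (x - 1 + 1)) := hpath (x - 1) (by omega)
      have hxx : x - 1 + 1 = x := by omega
      rw [hxx] at hT
      exact hBFS.branching.sub _ _ hT
  -- No other vertex of `P'` receives an arc from outside `P'`.
  have hC4 : ∀ b u, x ≤ b → b ≤ y → D u (p b) → u ∉ p '' Set.Icc x y →
      p b = p x ∨ p b = qf 0 := by
    intro b u hbx hby hDu hu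
    by_cases hbx' : b = x
    · exact Or.inl (by rw [hbx'])
    by_cases hq0 : p b = qf 0
    · exact Or.inr hq0
    exfalso
    have hbgt : x < b := by omega
    have humem : u ∈ p '' Set.Iic l := by
      by_contra hout
      refine hnS b hbx hby ?_
      rw [hS]
      exact ⟨⟨b, Set.mem_Iio.mpr (by omega), rfl⟩, u, hout, hDu⟩
    obtain ⟨j, hj, rfl⟩ := humem
    have hjl : j ≤ l := hj
    have hble : b ≤ j + 1 := hnf j b hjl (by omega) hDu
    have hjy : y < j := by
      rcases Nat.lt_or_ge y j with h | h
      · exact h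
      · exact absurd ⟨j, ⟨by omega, h⟩, rfl⟩ hu
    have hbq : p b ∈ qf '' Set.Iic (y - x) := by
      rw [hqim]
      exact ⟨b, ⟨hbx, hby⟩, rfl⟩
    obtain ⟨m, hm, hqm⟩ := hbq
    have hmle : m ≤ y - x := hm
    have hm0 : m ≠ 0 := by
      rintro rfl
      exact hq0 hqm.symm
    have hFarc : F (qf (m - 1)) (qf m) :=
      ((hqarc (qf (m - 1)) (qf m)).mpr
        ⟨m - 1, by omega, rfl, by rw [Nat.sub_add_cancel (by omega)]⟩).1
    obtain ⟨i', hi', hpi'⟩ := hqmem (m - 1) (by omega)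
    have hFarc' : F (p i') (p b) := by
      rw [hpi', ← hqm]
      exact hFarc
    have hi'1 : x ≤ i' := hi'.1
    have hi'2 : i' ≤ y := hi'.2
    rcases Nat.lt_trichotomy i' b with h | h | h
    · rcases hF.2.2.2.2.1 i' b (by omega) (by omega) h hFarc' with h2 | h2
      · exact hdeg1 i' hi'1 hi'2 h2
      · have h3 : p j = p i' := hone (p b) (p j) (p i') h2 hDu (hFD _ _ hFarc')
        have h4 : j = i' := hpinj j i' hjl (by omega) h3
        omega
    · have h5 : qf (m - 1) = qf m := by
        rw [← hpi', h]
        exact hqm.symm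
      have h6 := hqinj (Set.mem_Iic.mpr (by omega)) (Set.mem_Iic.mpr hmle) h5
      omega
    · exact hF.2.2.2.2.2 i' b (by omega) (by omega) h hFarc' j (by omega) hjl hDu
  -- The set equality.
  have hset : {v ∈ p '' Set.Icc x y | ∃ u, u ∉ p '' Set.Icc x y ∧ D u v}
      = {p x, qf 0} := by
    ext v
    simp only [Set.mem_setOf_eq, Set.mem_insert_iff, Set.mem_singleton_iff]
    constructor
    · rintro ⟨⟨b, hb, rfl⟩, u, hu, hDu⟩
      exact hC4 b u hb.1 hb.2 hDu hu
    · rintro (rfl | rfl)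
      · exact ⟨⟨x, ⟨le_rfl, hxy⟩, rfl⟩, hpxin⟩
      · exact ⟨hqmem 0 (Nat.zero_le _), hq0in⟩
  refine ⟨hset, ?_⟩
  -- Distinctness: suppose `p x = qf 0`.
  intro hcontra
  -- Then every walk ending strictly inside `P'` that avoids the arc
  -- `(p x, p (x+1))` stays in the interior of `P'`.
  have hW : ∀ q : List V, q.Chain' D → (p x, p (x + 1)) ∉ q.zip q.tail →
      ∀ b, x < b → b ≤ y → q.getLast? = some (p b) →
      ∀ v ∈ q, ∃ c, x < c ∧ c ≤ y ∧ v = p c := by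
    intro q
    induction q with
    | nil =>
      intro _ _ b _ _ _ v hv
      exact absurd hv List.not_mem_nil
    | cons u t ih =>
      intro hchain hpair b hbx hby hlast v hv
      cases t with
      | nil =>
        have hub : u = p b := by simpa using hlast
        rcases List.mem_cons.mp hv with rfl | h
        · exact ⟨b, hbx, hby, hub⟩
        · exact absurd h List.not_mem_nil
      | cons w rest =>
        have hchain' := List.isChain_cons_cons.mp hchain
        have hlast' : (w :: rest).getLast? = some (p b) := by
          rwa [List.getLast?_cons_cons] at hlast
        have hpair' : (p x, p (x + 1)) ∉ (w :: rest).zip (w :: rest).tail := by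
          intro hmem
          exact hpair (List.mem_cons_of_mem _ hmem)
        have hint := ih hchain'.2 hpair' b hbx hby hlast'
        obtain ⟨c, hc1, hc2, hwc⟩ := hint w (List.mem_cons_self)
        rcases List.mem_cons.mp hv with rfl | h
        · -- v = u, the first vertex of the walk
          have hDuw : D v (p c) := by
            rw [← hwc]
            exact hchain'.1
          by_cases hu : v ∈ p '' Set.Icc x y
          · obtain ⟨a, ha, rfl⟩ := hu
            have ha1 : x ≤ a := ha.1
            have ha2 : a ≤ y := ha.2
            have hca : c ≤ a + 1 := hnf a c (by omega) (by omega) hDuw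
            by_cases hax : a = x
            · exfalso
              apply hpair
              have hcx : c = x + 1 := by omega
              have heq : (p x, p (x + 1)) = (p a, w) := by
                rw [hax, hwc, hcx]
              rw [heq]
              exact List.mem_cons_self
            · exact ⟨a, by omega, ha2, rfl⟩
          · rcases hC4 c v (by omega) hc2 hDuw hu with h | h
            · have := hpinj c x (by omega) (by omega) h
              omega
            · rw [← hcontra] at h
              have := hpinj c x (by omega) (by omega) h
              omega
        · exact hint v h
  have harc : D (p x) (p (x + 1)) := hBFS.branching.sub _ _ (hpath x (by omega))
  have hdis : ∀ c, x < c → c ≤ y → ArcDisconnects D r (p x) (p (x + 1)) (p c) := by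
    intro c hc1 hc2 q hq
    obtain ⟨hne, hhead, hlast, hchain⟩ := hq
    by_contra hpair
    have hrq : r ∈ q := by
      cases q with
      | nil => exact absurd rfl hne
      | cons a t =>
        have ha : a = r := by simpa using hhead
        rw [← ha]
        exact List.mem_cons_self
    obtain ⟨c', hc'1, hc'2, hr⟩ := hW q hchain hpair c hc1 hc2 hlast r hrq
    have h0 : depth r = 0 := hBFS.root_level
    rw [hr, hdepth c' (by omega)] at h0
    omega
  exact hred.rule3 (p x) (p (x + 1)) (p (x + 1)) (p (x + 2)) harc
    (fun h => by
      have := hpinj (x + 1) (x + 2) (by omega) (by omega) h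
      omega)
    (hdis (x + 1) (by omega) (by omega)) (hdis (x + 2) (by omega) (by omega))
end

section
/- In the setting of a reduced no-instance with nice forest F of maximum number of leaves and key-vertex-free subpath P' of P: for any vertex x not in V(P'), at most 2 vertices of P' have arcs to x. -/
universe u

variable {V : Type u}

open Classical in
/-- Context packaging all hypotheses of stmt12. -/
structure Ctx {V : Type u} [Fintype V] (D T : V → V → Prop) (r : V) (depth : V → ℕ)
    (l x y : ℕ) (p : ℕ → V) (S : Set V) (F : V → V → Prop) : Prop where
  hred : Reduced D r
  hBFS : IsBFSTree D r T depth
  hinj : Set.InjOn p (Set.Iic l)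
  hpath : ∀ i, i < l → T (p i) (p (i + 1))
  hS : S = {v ∈ p '' Set.Iio l | ∃ u, u ∉ p '' Set.Iic l ∧ D u v}
  hF : NiceForest D l p S F
  hmax : ∀ F' : V → V → Prop, NiceForest D l p S F' →
      (treeLeaves F' (p '' Set.Iic l)).ncard ≤ (treeLeaves F (p '' Set.Iic l)).ncard
  hx : 1 ≤ x
  hxy : x ≤ y
  hy : y < l
  hnokey : ∀ i, x ≤ i → i ≤ y → p i ∉ keyVertices l p S F
  hb1 : ¬ F (p (x - 1)) (p x)
  hb2 : ¬ F (p y) (p (y + 1))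

set_option linter.unusedSectionVars false

namespace Ctx

variable {V : Type u} [Fintype V] {D T : V → V → Prop} {r : V} {depth : V → ℕ}
  {l x y : ℕ} {p : ℕ → V} {S : Set V} {F : V → V → Prop}
  (C : Ctx D T r depth l x y p S F)

include C

lemma pD {i : ℕ} (hi : i < l) : D (p i) (p (i + 1)) :=
  IsOutTreeOn.sub C.hBFS.branching _ _ (C.hpath i hi)

lemma depth_p {i : ℕ} (hi : i ≤ l) : depth (p i) = depth (p 0) + i := by
  induction i with
  | zero => simp
  | succ n ih =>
    have hn : n < l := by omega
    have := C.hBFS.level _ _ (C.hpath n hn)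
    rw [this, ih (by omega)]
    omega

lemma r_ne_p {i : ℕ} (h1 : 1 ≤ i) (hi : i ≤ l) : r ≠ p i := by
  intro h
  have hd := C.depth_p hi
  rw [← h, C.hBFS.root_level] at hd
  omega

/-- index jump of a D-arc within the path is at most one. -/
lemma arc_le {i j : ℕ} (hi : i ≤ l) (hj : j ≤ l) (h : D (p i) (p j)) : j ≤ i + 1 := by
  have := C.hBFS.no_forward _ _ h
  rw [C.depth_p hi, C.depth_p hj] at this
  omega

lemma p_inj {i j : ℕ} (hi : i ≤ l) (hj : j ≤ l) (h : p i = p j) : i = j :=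
  C.hinj hi hj h

/-- Members of the key-free zone are not in S. -/
lemma not_mem_S {m : ℕ} (h1 : x ≤ m) (h2 : m ≤ y) : p m ∉ S := by
  intro hs
  exact C.hnokey m h1 h2 (Or.inl (Or.inl (Or.inl hs)))

/-- Members of the key-free zone have an F-child. -/
lemma has_child {m : ℕ} (h1 : x ≤ m) (h2 : m ≤ y) : ∃ w, F (p m) w := by
  by_contra h
  push_neg at h
  have hml : m ≤ l := le_trans h2 C.hy.le
  exact C.hnokey m h1 h2 (Or.inl (Or.inl (Or.inr ⟨⟨m, Set.mem_Iic.mpr hml, rfl⟩, h⟩)))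

/-- Members of the key-free zone have F-outdegree at most 1. -/
lemma outdeg_one {m : ℕ} (h1 : x ≤ m) (h2 : m ≤ y) {w w' : V}
    (hw : F (p m) w) (hw' : F (p m) w') : w = w' := by
  by_contra hne
  have : 2 ≤ {w | F (p m) w}.ncard := by
    exact (Set.one_lt_ncard_iff (Set.toFinite _)).mpr ⟨w, w', hw, hw', hne⟩
  exact C.hnokey m h1 h2 (Or.inl (Or.inr this))

/-- The parent of a key-free-zone vertex has F-outdegree at most 1. -/
lemma parent_outdeg_one {m : ℕ} (h1 : x ≤ m) (h2 : m ≤ y) {u : V} (hu : F u (p m))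
    {w w' : V} (hw : F u w) (hw' : F u w') : w = w' := by
  by_contra hne
  have : 2 ≤ {w | F u w}.ncard := by
    exact (Set.one_lt_ncard_iff (Set.toFinite _)).mpr ⟨w, w', hw, hw', hne⟩
  exact C.hnokey m h1 h2 (Or.inr ⟨u, hu, this⟩)

/-- Unique existence of the F-parent for key-free-zone vertices. -/
lemma parent_exu {m : ℕ} (h1 : x ≤ m) (h2 : m ≤ y) : ∃! u, F u (p m) :=
  C.hF.2.2.1 _ ⟨m, Set.mem_Iic.mpr (le_trans h2 C.hy.le), rfl⟩ (C.not_mem_S h1 h2)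

omit C in
lemma no_cycle_aux {s v : V} (hF : NiceForest D l p S F) (hs : s ∈ S)
    (h : Relation.ReflTransGen F s v) : ¬ Relation.TransGen F v v := by
  induction h with
  | refl =>
    intro hc
    obtain ⟨c, _, hcs⟩ := Relation.TransGen.tail'_iff.mp hc
    exact hF.2.1 s hs c hcs
  | @tail u v hru huv ih =>
    intro hc
    obtain ⟨c, hvc, hcv⟩ := Relation.TransGen.tail'_iff.mp hc
    have hvS : v ∉ S := fun hvS => hF.2.1 v hvS u huv
    have hvm : v ∈ p '' Set.Iic l := (hF.1 u v huv).2.2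
    obtain ⟨w, _, hwu⟩ := hF.2.2.1 v hvm hvS
    have hcu : c = u := (hwu c hcv).trans (hwu u huv).symm
    exact ih (Relation.TransGen.head' huv (hcu ▸ hvc))

lemma no_cycle {v : V} (hv : v ∈ p '' Set.Iic l) : ¬ Relation.TransGen F v v := by
  obtain ⟨s, hs, hrtg⟩ := C.hF.2.2.2.1 v hv
  exact no_cycle_aux C.hF hs hrtg

end Ctx

open Classical in
/-- The index of the F-parent of `p m`. -/
noncomputable def parIdx {V : Type u} (F : V → V → Prop) (p : ℕ → V) (l : ℕ) (m : ℕ) : ℕ :=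
  if h : ∃ t, t ≤ l ∧ F (p t) (p m) then h.choose else 0

namespace Ctx

variable {V : Type u} [Fintype V] {D T : V → V → Prop} {r : V} {depth : V → ℕ}
  {l x y : ℕ} {p : ℕ → V} {S : Set V} {F : V → V → Prop}
  (C : Ctx D T r depth l x y p S F)

include C

lemma parIdx_spec {m : ℕ} (h1 : x ≤ m) (h2 : m ≤ y) :
    parIdx F p l m ≤ l ∧ F (p (parIdx F p l m)) (p m) ∧
      ∀ u, F u (p m) → u = p (parIdx F p l m) := by
  obtain ⟨u, hu, huniq⟩ := C.parent_exu h1 h2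
  obtain ⟨t₀, ht₀, hpt₀⟩ := (C.hF.1 u (p m) hu).2.1
  have hex : ∃ t, t ≤ l ∧ F (p t) (p m) := ⟨t₀, ht₀, by rw [hpt₀]; exact hu⟩
  rw [parIdx]
  rw [dif_pos hex]
  refine ⟨hex.choose_spec.1, hex.choose_spec.2, fun w hw => ?_⟩
  rw [huniq w hw, huniq _ hex.choose_spec.2]

lemma parIdx_le {m : ℕ} (h1 : x ≤ m) (h2 : m ≤ y) : parIdx F p l m ≤ l :=
  (C.parIdx_spec h1 h2).1

lemma parIdx_F {m : ℕ} (h1 : x ≤ m) (h2 : m ≤ y) : F (p (parIdx F p l m)) (p m) :=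
  (C.parIdx_spec h1 h2).2.1

lemma parIdx_uniq {m : ℕ} (h1 : x ≤ m) (h2 : m ≤ y) {u : V} (hu : F u (p m)) :
    u = p (parIdx F p l m) :=
  (C.parIdx_spec h1 h2).2.2 u hu

lemma parIdx_ge {m : ℕ} (h1 : x ≤ m) (h2 : m ≤ y) : m ≤ parIdx F p l m + 1 :=
  C.arc_le (C.parIdx_le h1 h2) (le_trans h2 C.hy.le)
    (C.hF.1 _ _ (C.parIdx_F h1 h2)).1

lemma parIdx_ne {m : ℕ} (h1 : x ≤ m) (h2 : m ≤ y) : parIdx F p l m ≠ m := by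
  intro h
  have hF1 := C.parIdx_F h1 h2
  rw [h] at hF1
  exact C.no_cycle ⟨m, Set.mem_Iic.mpr (le_trans h2 C.hy.le), rfl⟩
    (Relation.TransGen.single hF1)

lemma parIdx_cases {m : ℕ} (h1 : x ≤ m) (h2 : m ≤ y) :
    parIdx F p l m = m - 1 ∨ m < parIdx F p l m := by
  have := C.parIdx_ge h1 h2
  have := C.parIdx_ne h1 h2
  omega

lemma parIdx_x : x < parIdx F p l x := by
  rcases C.parIdx_cases le_rfl C.hxy with h | h
  · exfalso
    have := C.parIdx_F le_rfl C.hxy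
    rw [h] at this
    exact C.hb1 this
  · exact h

/-- A vertex of the key-free zone with forward parent has D-in-degree 1. -/
lemma indeg_one {m : ℕ} (h1 : x < m) (h2 : m ≤ y) (hpar : parIdx F p l m = m - 1) :
    ∀ u, D u (p m) → u = p (m - 1) := by
  have hm1x : x ≤ m - 1 := by omega
  have hm1y : m - 1 ≤ y := by omega
  have hFf : F (p (m - 1)) (p m) := by
    have := C.parIdx_F (le_of_lt h1) h2
    rwa [hpar] at this
  have h5 := C.hF.2.2.2.2.1 (m - 1) m (by have := C.hy; omega) (le_trans h2 C.hy.le) (by omega) hFf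
  rcases h5 with h5 | h5
  · exact absurd (C.hnokey (m - 1) hm1x hm1y (Or.inl (Or.inr h5))) (fun h => h)
  · obtain ⟨a, ha⟩ := Set.ncard_eq_one.mp h5
    have hmem : p (m - 1) ∈ {u | D u (p m)} := by
      have := C.pD (show m - 1 < l by have := C.hy; omega)
      have hco : m - 1 + 1 = m := by omega
      rw [hco] at this
      exact this
    rw [ha] at hmem
    intro u hu
    have : u ∈ {u | D u (p m)} := hu
    rw [ha] at this
    rw [this, hmem]

/-- Every D-in-neighbour of a key-free-zone vertex is on the path, with index
in the window. -/
lemma window {m : ℕ} (h1 : x ≤ m) (h2 : m ≤ y) {u : V} (hu : D u (p m)) :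
    ∃ γ, γ ≤ l ∧ u = p γ ∧ m ≤ γ + 1 ∧
      (m < parIdx F p l m → γ ≤ parIdx F p l m) := by
  have hnS := C.not_mem_S h1 h2
  rw [C.hS] at hnS
  have hmem : p m ∈ p '' Set.Iio l := ⟨m, Set.mem_Iio.mpr (lt_of_le_of_lt h2 C.hy), rfl⟩
  have hin : u ∈ p '' Set.Iic l := by
    by_contra hcon
    exact hnS ⟨hmem, u, hcon, hu⟩
  obtain ⟨γ, hγl, hγ⟩ := hin
  rw [Set.mem_Iic] at hγl
  refine ⟨γ, hγl, hγ.symm, C.arc_le hγl (le_trans h2 C.hy.le) (hγ ▸ hu), fun hlt => ?_⟩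
  by_contra hcon
  push_neg at hcon
  exact C.hF.2.2.2.2.2 (parIdx F p l m) m (C.parIdx_le h1 h2) (le_trans h2 C.hy.le)
    hlt (C.parIdx_F h1 h2) γ hcon hγl (hγ ▸ hu)

end Ctx
namespace Ctx

variable {V : Type u} [Fintype V] {D T : V → V → Prop} {r : V} {depth : V → ℕ}
  {l x y : ℕ} {p : ℕ → V} {S : Set V} {F : V → V → Prop}
  (C : Ctx D T r depth l x y p S F)

include C

/-- Key structural lemma: a key-free-zone vertex whose parent is not its path
predecessor must F-reach its path predecessor (else we could swap parents and
gain a leaf, contradicting maximality). -/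
lemma desc {m : ℕ} (h1 : x < m) (h2 : m ≤ y) (hpar : m < parIdx F p l m) :
    Relation.ReflTransGen F (p m) (p (m - 1)) := by
  by_contra hnd
  set t := parIdx F p l m with hts
  have hxm : x ≤ m := h1.le
  have htle : t ≤ l := C.parIdx_le hxm h2
  have htF : F (p t) (p m) := C.parIdx_F hxm h2
  have htuniq : ∀ u, F u (p m) → u = p t := fun u hu => C.parIdx_uniq hxm h2 hu
  have hml : m ≤ l := le_trans h2 C.hy.le
  have hm1l : m - 1 ≤ l := by omega
  have hm1x : x ≤ m - 1 := by omega
  have hm1y : m - 1 ≤ y := by omega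
  have htm1 : t ≠ m - 1 := by omega
  have hptm1 : p t ≠ p (m - 1) := fun h => htm1 (C.p_inj htle hm1l h)
  -- the unique child of p t is p m
  have htchild : ∀ w, F (p t) w → w = p m := fun w hw =>
    C.parent_outdeg_one hxm h2 htF hw htF
  -- the old child of p (m-1)
  obtain ⟨c, hc⟩ := C.has_child hm1x hm1y
  have hcnm : c ≠ p m := by
    intro h
    rw [h] at hc
    exact hptm1 ((htuniq _ hc).symm)
  have hDm1 : D (p (m - 1)) (p m) := by
    have := C.pD (show m - 1 < l by omega)
    have hco : m - 1 + 1 = m := by omega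
    rwa [hco] at this
  have hmmem : p m ∈ p '' Set.Iic l := ⟨m, Set.mem_Iic.mpr hml, rfl⟩
  have hm1mem : p (m - 1) ∈ p '' Set.Iic l := ⟨m - 1, Set.mem_Iic.mpr hm1l, rfl⟩
  -- the modified forest
  set F' : V → V → Prop :=
    fun u v => (F u v ∧ ¬(u = p t ∧ v = p m)) ∨ (u = p (m - 1) ∧ v = p m) with hF's
  have hL4 : ∀ v w, Relation.ReflTransGen F v w → ¬ Relation.ReflTransGen F (p m) w →
      Relation.ReflTransGen F' v w := by
    intro v w hvw
    induction hvw with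
    | refl => intro _; exact Relation.ReflTransGen.refl
    | @tail u w huw hFuw ih =>
      intro hw
      have hnu : ¬ Relation.ReflTransGen F (p m) u := fun h => hw (h.tail hFuw)
      refine (ih hnu).tail ?_
      left
      refine ⟨hFuw, fun hcon => ?_⟩
      exact hw (hcon.2 ▸ Relation.ReflTransGen.refl)
  have hL5 : ∀ v, Relation.ReflTransGen F (p m) v → Relation.ReflTransGen F' (p m) v := by
    intro v hv
    induction hv with
    | refl => exact Relation.ReflTransGen.refl
    | @tail u w huw hFuw ih =>
      refine ih.tail ?_
      left
      refine ⟨hFuw, fun hcon => ?_⟩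
      rw [hcon.1] at huw
      exact C.no_cycle hmmem ((Relation.TransGen.single htF).trans_right (hcon.2 ▸ huw))
  have hNF' : NiceForest D l p S F' := by
    refine ⟨?_, ?_, ?_, ?_, ?_, ?_⟩
    · rintro u v (⟨huv, -⟩ | ⟨hu, hv⟩)
      · exact C.hF.1 u v huv
      · subst hu; subst hv
        exact ⟨hDm1, hm1mem, hmmem⟩
    · rintro s hs u (⟨hus, -⟩ | ⟨-, hv⟩)
      · exact C.hF.2.1 s hs u hus
      · exact C.not_mem_S hxm h2 (hv ▸ hs)
    · intro v hv hvS
      by_cases hvm : v = p m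
      · subst hvm
        refine ⟨p (m - 1), Or.inr ⟨rfl, rfl⟩, ?_⟩
        rintro u (⟨hu, hno⟩ | ⟨hu, -⟩)
        · exact absurd ⟨htuniq u hu, rfl⟩ hno
        · exact hu
      · obtain ⟨u, hu, huniq⟩ := C.hF.2.2.1 v hv hvS
        refine ⟨u, Or.inl ⟨hu, fun h => hvm h.2⟩, ?_⟩
        rintro w (⟨hw, -⟩ | ⟨-, hw⟩)
        · exact huniq w hw
        · exact absurd hw hvm
    · intro v hv
      obtain ⟨s0, hs0, hs0r⟩ := C.hF.2.2.2.1 (p (m - 1)) hm1mem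
      have hs0' : Relation.ReflTransGen F' s0 (p m) :=
        (hL4 _ _ hs0r hnd).tail (Or.inr ⟨rfl, rfl⟩)
      by_cases hreach : Relation.ReflTransGen F (p m) v
      · exact ⟨s0, hs0, hs0'.trans (hL5 v hreach)⟩
      · obtain ⟨s, hs, hsr⟩ := C.hF.2.2.2.1 v hv
        exact ⟨s, hs, hL4 _ _ hsr hreach⟩
    · rintro i j hil hjl hij (⟨hFij, hno⟩ | ⟨hi, hj⟩)
      · rcases C.hF.2.2.2.2.1 i j hil hjl hij hFij with hout | hind
        · by_cases hit : p i = p t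
          · exfalso
            obtain ⟨w, w', hw, hw', hne⟩ := (Set.one_lt_ncard_iff (Set.toFinite _)).mp hout
            rw [hit] at hw hw'
            exact hne ((htchild w hw).trans (htchild w' hw').symm)
          · left
            refine le_trans hout (Set.ncard_le_ncard ?_ (Set.toFinite _))
            intro w hw
            exact Or.inl ⟨hw, fun hcon => hit hcon.1⟩
        · right; exact hind
      · left
        have him : p i = p (m - 1) := hi
        have : ({c, p m} : Set V) ⊆ {w | F' (p i) w} := by
          rintro w (hw | hw)
          · left
            rw [him, hw]
            exact ⟨hc, fun hcon => hptm1 hcon.1.symm⟩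
          · right
            simp only [Set.mem_singleton_iff] at hw
            exact ⟨him, hw⟩
        calc (2 : ℕ) = ({c, p m} : Set V).ncard := (Set.ncard_pair hcnm).symm
          _ ≤ _ := Set.ncard_le_ncard this (Set.toFinite _)
    · rintro i j hil hjl hji (⟨hFij, -⟩ | ⟨hi, hj⟩)
      · exact C.hF.2.2.2.2.2 i j hil hjl hji hFij
      · exfalso
        have : i = m - 1 := C.p_inj hil hm1l hi
        have : j = m := C.p_inj hjl hml hj
        omega
  -- leaf counting
  have hsub : insert (p t) (treeLeaves F (p '' Set.Iic l)) ⊆ treeLeaves F' (p '' Set.Iic l) := by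
    rintro v (hv | hv)
    · subst v
      refine ⟨⟨t, Set.mem_Iic.mpr htle, rfl⟩, ?_⟩
      rintro w (⟨hw, hno⟩ | ⟨hw, -⟩)
      · exact hno ⟨rfl, htchild w hw⟩
      · exact hptm1 hw
    · refine ⟨hv.1, ?_⟩
      rintro w (⟨hw, -⟩ | ⟨hw, -⟩)
      · exact hv.2 w hw
      · rw [hw] at hv
        exact hv.2 c hc
  have hnotmem : p t ∉ treeLeaves F (p '' Set.Iic l) := fun h => h.2 (p m) htF
  have hcard : (treeLeaves F (p '' Set.Iic l)).ncard + 1 ≤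
      (treeLeaves F' (p '' Set.Iic l)).ncard := by
    rw [← Set.ncard_insert_of_notMem hnotmem (Set.toFinite _)]
    exact Set.ncard_le_ncard hsub (Set.toFinite _)
  have := C.hmax F' hNF'
  omega

end Ctx
open Classical in
/-- The set of "block start" indices in the key-free zone. -/
noncomputable def BSet {V : Type u} (F : V → V → Prop) (p : ℕ → V) (l x y : ℕ) : Finset ℕ :=
  (Finset.Icc x y).filter (fun m => parIdx F p l m ≠ m - 1)

open Classical in
/-- The next block start strictly above `β` (or `y + 1` if none). -/
noncomputable def nxtB {V : Type u} (F : V → V → Prop) (p : ℕ → V) (l x y : ℕ) (β : ℕ) : ℕ :=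
  if h : ((BSet F p l x y).filter (fun b => β < b)).Nonempty
  then ((BSet F p l x y).filter (fun b => β < b)).min' h else y + 1

namespace Ctx

variable {V : Type u} [Fintype V] {D T : V → V → Prop} {r : V} {depth : V → ℕ}
  {l x y : ℕ} {p : ℕ → V} {S : Set V} {F : V → V → Prop}
  (C : Ctx D T r depth l x y p S F)

omit C in
lemma mem_BSet {m : ℕ} :
    m ∈ BSet F p l x y ↔ (x ≤ m ∧ m ≤ y ∧ parIdx F p l m ≠ m - 1) := by
  simp [BSet, Finset.mem_filter, Finset.mem_Icc, and_assoc]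

include C

lemma x_mem_BSet : x ∈ BSet F p l x y := by
  rw [mem_BSet]
  refine ⟨le_rfl, C.hxy, ?_⟩
  have h1 := C.parIdx_x
  have h2 := C.hx
  omega

lemma BSet_gt {m : ℕ} (hm : m ∈ BSet F p l x y) : m < parIdx F p l m := by
  rw [mem_BSet] at hm
  rcases C.parIdx_cases hm.1 hm.2.1 with h | h
  · exact absurd h hm.2.2
  · exact h

lemma not_BSet {m : ℕ} (h1 : x ≤ m) (h2 : m ≤ y) (hm : m ∉ BSet F p l x y) :
    parIdx F p l m = m - 1 := by
  rw [mem_BSet] at hm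
  push_neg at hm
  exact hm h1 h2

omit C in
lemma nxtB_le : nxtB F p l x y β ≤ y + 1 := by
  rw [nxtB]
  split
  · next h =>
    have := Finset.min'_mem _ h
    rw [Finset.mem_filter, mem_BSet] at this
    omega
  · exact le_rfl

omit C in
lemma nxtB_gt {β : ℕ} (hβ : β ≤ y) : β < nxtB F p l x y β := by
  rw [nxtB]
  split
  · next h =>
    have := Finset.min'_mem _ h
    rw [Finset.mem_filter] at this
    exact this.2
  · omega

omit C in
lemma nxtB_min {β b : ℕ} (hb : b ∈ BSet F p l x y) (hbβ : β < b) :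
    nxtB F p l x y β ≤ b := by
  rw [nxtB]
  have hne : ((BSet F p l x y).filter (fun b => β < b)).Nonempty :=
    ⟨b, Finset.mem_filter.mpr ⟨hb, hbβ⟩⟩
  rw [dif_pos hne]
  exact Finset.min'_le _ _ (Finset.mem_filter.mpr ⟨hb, hbβ⟩)

omit C in
lemma nxtB_mem {β b : ℕ} (hb : b ∈ BSet F p l x y) (hbβ : β < b) :
    nxtB F p l x y β ∈ BSet F p l x y := by
  rw [nxtB]
  have hne : ((BSet F p l x y).filter (fun b => β < b)).Nonempty :=
    ⟨b, Finset.mem_filter.mpr ⟨hb, hbβ⟩⟩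
  rw [dif_pos hne]
  have := Finset.min'_mem _ hne
  rw [Finset.mem_filter] at this
  exact this.1

omit C in
lemma no_BSet_between {β b : ℕ} (hb : b ∈ BSet F p l x y) (h1 : β < b) :
    nxtB F p l x y β ≤ b :=
  nxtB_min hb h1

/-- Climbing within a block: from a block start `β` up to `nxtB β - 1`. -/
lemma reach_up {β : ℕ} (hβ : β ∈ BSet F p l x y) :
    ∀ m, β ≤ m → m < nxtB F p l x y β → Relation.ReflTransGen F (p β) (p m) := by
  intro m
  induction m with
  | zero =>
    intro h1 h2
    have hb0 : β = 0 := by omega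
    rw [hb0]
  | succ n ih =>
    intro h1 h2
    rcases Nat.lt_or_ge β (n + 1) with hlt | hge
    · have hn1 : n + 1 ∉ BSet F p l x y := by
        intro hmem
        exact absurd (nxtB_min hmem hlt) (by omega)
      have hny : n + 1 ≤ y := by
        have := nxtB_le (V := V) (F := F) (p := p) (l := l) (x := x) (y := y) (β := β)
        omega
      have hnx : x ≤ n + 1 := by
        rw [mem_BSet] at hβ
        omega
      have hpar := C.not_BSet hnx hny hn1
      have harc : F (p n) (p (n + 1)) := by
        have := C.parIdx_F hnx hny
        rwa [hpar, Nat.add_sub_cancel] at this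
      exact (ih (by omega) (by omega)).tail harc
    · have : β = n + 1 := by omega
      subst this
      exact Relation.ReflTransGen.refl

/-- Descending from a block start `β` all the way down to `x`. -/
lemma reach_down {β : ℕ} (hβ : β ∈ BSet F p l x y) :
    ∀ m, x ≤ m → m ≤ β → Relation.ReflTransGen F (p β) (p m) := by
  have hβx : x ≤ β := (mem_BSet.mp hβ).1
  have hβy : β ≤ y := (mem_BSet.mp hβ).2.1
  intro m hm1 hm2
  obtain ⟨d, hd⟩ : ∃ d, m + d = β := ⟨β - m, by omega⟩
  induction d generalizing m with
  | zero =>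
    have : m = β := by omega
    subst this
    exact Relation.ReflTransGen.refl
  | succ n ih =>
    have hup : Relation.ReflTransGen F (p β) (p (m + 1)) := ih (m + 1) (by omega) (by omega) (by omega)
    by_cases hmem : m + 1 ∈ BSet F p l x y
    · exact hup.trans (by
        have := C.desc (show x < m + 1 by omega) (by omega) (C.BSet_gt hmem)
        rwa [Nat.add_sub_cancel] at this)
    · have hpar := C.not_BSet (by omega) (by omega) hmem
      rcases Relation.ReflTransGen.cases_tail hup with heq | ⟨c, hc1, hc2⟩
      · exfalso
        have : m + 1 = β := C.p_inj (show m + 1 ≤ l by have := C.hy; omega)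
          (show β ≤ l by have := C.hy; omega) heq
        rw [this] at hmem
        exact hmem hβ
      · have : c = p (parIdx F p l (m + 1)) := C.parIdx_uniq (by omega) (by omega) hc2
        rw [this, hpar, Nat.add_sub_cancel] at hc1
        exact hc1

/-- Everything F-reachable from a block start is on the path, below `nxtB β`. -/
lemma reach_bound {β : ℕ} (hβ : β ∈ BSet F p l x y) :
    ∀ v, Relation.ReflTransGen F (p β) v →
      ∃ s, s ≤ l ∧ v = p s ∧ (s < x ∨ (x ≤ s ∧ s < nxtB F p l x y β)) := by
  have hβx : x ≤ β := (mem_BSet.mp hβ).1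
  have hβy : β ≤ y := (mem_BSet.mp hβ).2.1
  intro v hv
  induction hv with
  | refl =>
    exact ⟨β, le_trans hβy C.hy.le, rfl, Or.inr ⟨hβx, nxtB_gt hβy⟩⟩
  | @tail u w huw hFuw ih =>
    obtain ⟨s, hsl, rfl, hs⟩ := ih
    obtain ⟨s', hs'l, rfl⟩ : ∃ s', s' ≤ l ∧ w = p s' := by
      obtain ⟨s', hmem, hws'⟩ := (C.hF.1 _ _ hFuw).2.2
      exact ⟨s', Set.mem_Iic.mp hmem, hws'.symm⟩
    have harc : s' ≤ s + 1 := C.arc_le hsl hs'l ((C.hF.1 _ _ hFuw).1)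
    refine ⟨s', hs'l, rfl, ?_⟩
    rcases hs with hlow | ⟨hsx, hsn⟩
    · -- u is below the zone, w stays below
      left
      by_contra hcon
      push_neg at hcon
      have hs'y : s' ≤ y := by omega
      have : p s = p (parIdx F p l s') := C.parIdx_uniq hcon hs'y hFuw
      have hseq : s = parIdx F p l s' := C.p_inj hsl (C.parIdx_le hcon hs'y) this
      rcases C.parIdx_cases hcon hs'y with hc | hc
      · -- s = s' - 1, so s' = x and parIdx x = x - 1, contradiction
        have hs'x : s' = x := by omega
        have := C.parIdx_x
        rw [← hs'x] at this
        omega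
      · omega
    · -- u in the zone below nxtB β
      by_cases hs'x : s' < x
      · exact Or.inl hs'x
      · push_neg at hs'x
        right
        refine ⟨hs'x, ?_⟩
        have hsy : s ≤ y := by
          have := nxtB_le (V := V) (F := F) (p := p) (l := l) (x := x) (y := y) (β := β)
          omega
        by_cases hs'y : y < s'
        · exfalso
          have hsey : s = y := by omega
          have hs'ey : s' = y + 1 := by omega
          rw [hsey, hs'ey] at hFuw
          exact C.hb2 hFuw
        · push_neg at hs'y
          have : p s = p (parIdx F p l s') := C.parIdx_uniq hs'x hs'y hFuw
          have hseq : s = parIdx F p l s' := C.p_inj hsl (C.parIdx_le hs'x hs'y) this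
          by_contra hcon
          push_neg at hcon
          have h1 : s' = nxtB F p l x y β := by omega
          have h2 : s = s' - 1 := by omega
          have hmm : s' ∉ BSet F p l x y := by
            rw [mem_BSet]
            push_neg
            intro _ _
            omega
          rw [h1] at hmm
          by_cases hne : ((BSet F p l x y).filter (fun b => β < b)).Nonempty
          · exact hmm (by
              rw [nxtB, dif_pos hne]
              have := Finset.min'_mem _ hne
              rw [Finset.mem_filter] at this
              exact this.1)
          · rw [nxtB, dif_neg hne] at h1
            omega

end Ctx
namespace Ctx

variable {V : Type u} [Fintype V] {D T : V → V → Prop} {r : V} {depth : V → ℕ}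
  {l x y : ℕ} {p : ℕ → V} {S : Set V} {F : V → V → Prop}
  (C : Ctx D T r depth l x y p S F)

include C

/-- The top block start. -/
noncomputable def aIdx : ℕ := (BSet F p l x y).max' ⟨x, C.x_mem_BSet⟩

lemma aIdx_mem : C.aIdx ∈ BSet F p l x y := Finset.max'_mem _ _

lemma aIdx_max {b : ℕ} (hb : b ∈ BSet F p l x y) : b ≤ C.aIdx := Finset.le_max' _ _ hb

lemma aIdx_y : C.aIdx ≤ y := (mem_BSet.mp C.aIdx_mem).2.1

lemma aIdx_x : x ≤ C.aIdx := (mem_BSet.mp C.aIdx_mem).1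

lemma nxtB_aIdx : nxtB F p l x y C.aIdx = y + 1 := by
  rw [nxtB, dif_neg]
  intro ⟨b, hb⟩
  rw [Finset.mem_filter] at hb
  exact absurd (C.aIdx_max hb.1) (by omega)

/-- The parent of a block start is at least the next block start. -/
lemma nxtB_le_parIdx {β : ℕ} (hβ : β ∈ BSet F p l x y) :
    nxtB F p l x y β ≤ parIdx F p l β := by
  have hβx : x ≤ β := (mem_BSet.mp hβ).1
  have hβy : β ≤ y := (mem_BSet.mp hβ).2.1
  by_contra hcon
  push_neg at hcon
  have hgt : β < parIdx F p l β := C.BSet_gt hβ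
  have := C.reach_up hβ (parIdx F p l β) hgt.le hcon
  exact C.no_cycle ⟨β, Set.mem_Iic.mpr (le_trans hβy C.hy.le), rfl⟩
    (Relation.TransGen.trans_right this (Relation.TransGen.single (C.parIdx_F hβx hβy)))

/-- For non-top block starts: the parent is on the path to it from the next
block start, hence bounded by `nxtB (nxtB β)`. -/
lemma parIdx_lt_of_reach {β γ : ℕ} (hβ : β ∈ BSet F p l x y) (hγ : γ ∈ BSet F p l x y)
    (hlt : β < γ) : x ≤ parIdx F p l β ∧ parIdx F p l β < nxtB F p l x y γ := by
  have hβx : x ≤ β := (mem_BSet.mp hβ).1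
  have hβy : β ≤ y := (mem_BSet.mp hβ).2.1
  have hγy : γ ≤ y := (mem_BSet.mp hγ).2.1
  have hreach := C.reach_down hγ β hβx hlt.le
  rcases Relation.ReflTransGen.cases_tail hreach with heq | ⟨c, hc1, hc2⟩
  · exfalso
    have : β = γ := C.p_inj (by have := C.hy; omega) (by have := C.hy; omega) heq
    omega
  · have hc : c = p (parIdx F p l β) := C.parIdx_uniq hβx hβy hc2
    rw [hc] at hc1
    obtain ⟨s, hsl, hse, hs⟩ := C.reach_bound hγ _ hc1
    have hseq : parIdx F p l β = s := C.p_inj (C.parIdx_le hβx hβy) hsl hse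
    have hβlt : β < parIdx F p l β := C.BSet_gt hβ
    rcases hs with h | h
    · omega
    · omega

lemma parIdx_le_y {β : ℕ} (hβ : β ∈ BSet F p l x y) (hlt : β < C.aIdx) :
    parIdx F p l β ≤ y := by
  have := C.parIdx_lt_of_reach hβ C.aIdx_mem hlt
  have := C.nxtB_aIdx
  omega

/-- The top block start has its parent above `y`. -/
lemma parIdx_aIdx_gt : y < parIdx F p l C.aIdx := by
  by_contra hcon
  push_neg at hcon
  have hgt : C.aIdx < parIdx F p l C.aIdx := C.BSet_gt C.aIdx_mem
  have := C.reach_up C.aIdx_mem (parIdx F p l C.aIdx) hgt.le (by rw [C.nxtB_aIdx]; omega)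
  exact C.no_cycle ⟨C.aIdx, Set.mem_Iic.mpr (le_trans C.aIdx_y C.hy.le), rfl⟩
    (Relation.TransGen.trans_right this (Relation.TransGen.single (C.parIdx_F C.aIdx_x C.aIdx_y)))

/-- The exact parent formula for non-top block starts. -/
lemma parIdx_eq {β : ℕ} (hβ : β ∈ BSet F p l x y) (hlt : β < C.aIdx) :
    parIdx F p l β = nxtB F p l x y (nxtB F p l x y β) - 1 ∧
    nxtB F p l x y β ≤ parIdx F p l β := by
  have hβx : x ≤ β := (mem_BSet.mp hβ).1
  have hβy : β ≤ y := (mem_BSet.mp hβ).2.1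
  have hnmem : nxtB F p l x y β ∈ BSet F p l x y := nxtB_mem C.aIdx_mem hlt
  have hnle : nxtB F p l x y β ≤ C.aIdx := nxtB_min C.aIdx_mem hlt
  have hng : β < nxtB F p l x y β := nxtB_gt hβy
  have h1 : nxtB F p l x y β ≤ parIdx F p l β := C.nxtB_le_parIdx hβ
  have hnn : nxtB F p l x y β < nxtB F p l x y (nxtB F p l x y β) :=
    nxtB_gt (mem_BSet.mp hnmem).2.1
  have h2 : parIdx F p l β < nxtB F p l x y (nxtB F p l x y β) :=
    (C.parIdx_lt_of_reach hβ hnmem (nxtB_gt hβy)).2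
  refine ⟨?_, h1⟩
  set t := parIdx F p l β with hts
  by_cases hty : t + 1 ≤ y
  · -- t+1 is a block start
    have htx : x ≤ t + 1 := by omega
    have htB : t + 1 ∈ BSet F p l x y := by
      rw [mem_BSet]
      refine ⟨htx, hty, ?_⟩
      intro hcon
      -- then p t has two children: p β and p (t+1)
      have harc : F (p t) (p (t + 1)) := by
        have := C.parIdx_F htx hty
        rwa [hcon, Nat.add_sub_cancel] at this
      have := C.parent_outdeg_one hβx hβy (C.parIdx_F hβx hβy) harc (C.parIdx_F hβx hβy)
      have : t + 1 = β := C.p_inj (by have := C.hy; omega) (by have := C.hy; omega) this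
      omega
    have := nxtB_min htB (show nxtB F p l x y β < t + 1 by omega)
    omega
  · -- t = y
    have hta : β < C.aIdx := hlt
    have htly : t ≤ y := C.parIdx_le_y hβ hlt
    have hnnle : nxtB F p l x y (nxtB F p l x y β) ≤ y + 1 := nxtB_le
    omega

end Ctx
lemma mem_of_getLast?_eq {α : Type _} {l : List α} {a : α} (h : l.getLast? = some a) :
    a ∈ l := by
  have ha : a ∈ l.getLast? := by rw [h]; rfl
  obtain ⟨hne, rfl⟩ := List.mem_getLast?_eq_getLast ha
  exact List.getLast_mem hne

lemma walk_rec {V : Type u} {D : V → V → Prop} {r v : V} {q : List V}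
    (h : IsWalk D r v q) :
    (v = r ∧ q = [r]) ∨ ∃ u q₀, IsWalk D r u q₀ ∧ D u v ∧ q = q₀ ++ [v] := by
  obtain ⟨hne, hhead, hlast, hchain⟩ := h
  rcases List.eq_nil_or_concat q with rfl | ⟨q₀, a, hqa⟩
  · exact absurd rfl hne
  · rw [List.concat_eq_append] at hqa
    subst hqa
    have ha : a = v := by
      rw [List.getLast?_concat] at hlast
      exact Option.some.inj hlast
    subst ha
    rcases List.eq_nil_or_concat q₀ with rfl | ⟨q₁, u, hqb⟩
    · left
      simp only [List.nil_append, List.head?_cons] at hhead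
      exact ⟨Option.some.inj hhead, by simp [Option.some.inj hhead]⟩
    · rw [List.concat_eq_append] at hqb
      subst hqb
      right
      refine ⟨u, q₁ ++ [u], ⟨by simp, ?_, List.getLast?_concat, ?_⟩, ?_, rfl⟩
      · rwa [List.head?_append_of_ne_nil _ (by simp)] at hhead
      · have := List.isChain_append.mp hchain
        exact this.1
      · have := List.isChain_append.mp hchain
        have h3 := this.2.2
        apply h3
        · exact List.getLast?_concat
        · rfl

namespace Ctx

variable {V : Type u} [Fintype V] {D T : V → V → Prop} {r : V} {depth : V → ℕ}
  {l x y : ℕ} {p : ℕ → V} {S : Set V} {F : V → V → Prop}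
  (C : Ctx D T r depth l x y p S F)

include C

/-- Every walk from the root to `p τ` visits `p c`, provided there is no block
start in the interval `(c, τ]`. -/
lemma visits_low {c : ℕ} (hcx : x ≤ c) (hcy : c ≤ y) :
    ∀ n (q : List V) (τ : ℕ), q.length ≤ n → c ≤ τ → τ ≤ y →
      (∀ b ∈ BSet F p l x y, b ≤ c ∨ τ < b) →
      IsWalk D r (p τ) q → p c ∈ q := by
  intro n
  induction n with
  | zero =>
    intro q τ hlen _ _ _ hw
    exfalso
    have := hw.1
    rw [← List.length_pos_iff_ne_nil] at this
    omega
  | succ n ih =>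
    intro q τ hlen h1 h2 hB hw
    rcases walk_rec hw with ⟨heq, rfl⟩ | ⟨u, q₀, hw₀, hD, rfl⟩
    · exact absurd heq.symm (C.r_ne_p (by have := C.hx; omega) (by have := C.hy; omega))
    · by_cases hτc : τ = c
      · subst hτc
        exact List.mem_append_right _ (List.mem_singleton_self _)
      · have hcτ : c < τ := by omega
        have hτB : τ ∉ BSet F p l x y := by
          intro hmem
          rcases hB τ hmem with h | h <;> omega
        have hpar := C.not_BSet (by omega) h2 hτB
        have hu : u = p (τ - 1) := C.indeg_one (by omega) h2 hpar u hD
        subst hu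
        apply List.mem_append_left
        refine ih q₀ (τ - 1) ?_ (by omega) (by omega) ?_ hw₀
        · have hlq : (q₀ ++ [p τ]).length = q₀.length + 1 := by simp
          omega
        · intro b hb
          rcases hB b hb with h | h
          · exact Or.inl h
          · exact Or.inr (by omega)

/-- Rule 4 excludes chords into a block start from the middle of the block
above. -/
lemma no_chord {β γ : ℕ} (hβ : β ∈ BSet F p l x y) (hβa : β < C.aIdx)
    (h1 : nxtB F p l x y β ≤ γ) (h2 : γ < parIdx F p l β) : ¬ D (p γ) (p β) := by
  intro hD
  have hβx : x ≤ β := (mem_BSet.mp hβ).1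
  have hβy : β ≤ y := (mem_BSet.mp hβ).2.1
  obtain ⟨heq, hge⟩ := C.parIdx_eq hβ hβa
  have hng : β < nxtB F p l x y β := nxtB_gt hβy
  have hty : parIdx F p l β ≤ y := C.parIdx_le_y hβ hβa
  have htl : parIdx F p l β ≤ l := C.parIdx_le hβx hβy
  have hdis : SetDisconnects D r {p γ} (p (parIdx F p l β)) := by
    constructor
    · intro hmem
      rw [Set.mem_singleton_iff] at hmem
      have : parIdx F p l β = γ := C.p_inj htl (by omega) hmem
      omega
    · intro q hq
      refine ⟨p γ, rfl, ?_⟩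
      refine C.visits_low (by omega) (by omega) q.length q (parIdx F p l β)
        le_rfl (by omega) hty ?_ hq
      intro b hb
      by_cases hbγ : b ≤ γ
      · exact Or.inl hbγ
      · push_neg at hbγ
        right
        have hbn : nxtB F p l x y β < b := by omega
        have := nxtB_min hb hbn
        omega
  have hrule := C.hred.rule4 {p γ} (p (parIdx F p l β)) (p β)
    (by rw [Set.ncard_singleton]; omega) hdis
    (by
      intro u hu
      rw [Set.mem_singleton_iff] at hu
      rw [hu]
      exact hD)
  exact hrule (C.hF.1 _ _ (C.parIdx_F hβx hβy)).1

/-- Refined in-neighbour window for non-top block starts. -/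
lemma window_B {β : ℕ} (hβ : β ∈ BSet F p l x y) (hβa : β < C.aIdx) {u : V}
    (hu : D u (p β)) :
    ∃ γ, γ ≤ l ∧ u = p γ ∧
      (γ = β - 1 ∨ (β ≤ γ ∧ γ < nxtB F p l x y β) ∨
        γ = nxtB F p l x y (nxtB F p l x y β) - 1) := by
  have hβx : x ≤ β := (mem_BSet.mp hβ).1
  have hβy : β ≤ y := (mem_BSet.mp hβ).2.1
  have hgt : β < parIdx F p l β := C.BSet_gt hβ
  obtain ⟨γ, hγl, rfl, hwin, hwin2⟩ := C.window hβx hβy hu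
  have hwin2' := hwin2 hgt
  obtain ⟨heq, hge⟩ := C.parIdx_eq hβ hβa
  refine ⟨γ, hγl, rfl, ?_⟩
  by_cases hc1 : γ + 1 = β
  · left; omega
  · by_cases hc2 : γ < nxtB F p l x y β
    · right; left; omega
    · push_neg at hc2
      right; right
      by_cases hc3 : γ < parIdx F p l β
      · exact absurd hu (C.no_chord hβ hβa hc2 hc3)
      · omega

/-- The main separation lemma: every walk to a vertex in the "safe zone"
visits `p i1` or `p i3`. -/
lemma visits_pair {i1 i3 β3 : ℕ} (hi1x : x ≤ i1) (hβ3 : β3 ∈ BSet F p l x y)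
    (hi1β3 : i1 < β3) (hi3lo : β3 ≤ i3) (hi3hi : i3 < nxtB F p l x y β3) :
    ∀ n (q : List V) (τ : ℕ), q.length ≤ n →
      ((i1 ≤ τ ∧ τ < β3) ∨ (i3 ≤ τ ∧ τ < nxtB F p l x y β3)) →
      IsWalk D r (p τ) q → p i1 ∈ q ∨ p i3 ∈ q := by
  have hβ3y : β3 ≤ y := (mem_BSet.mp hβ3).2.1
  have hβ3x : x ≤ β3 := (mem_BSet.mp hβ3).1
  have hnle : nxtB F p l x y β3 ≤ y + 1 := nxtB_le
  have hβ3a : β3 ≤ C.aIdx := C.aIdx_max hβ3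
  intro n
  induction n with
  | zero =>
    intro q τ hlen _ hw
    exfalso
    have := hw.1
    rw [← List.length_pos_iff_ne_nil] at this
    omega
  | succ n ih =>
    intro q τ hlen hτ hw
    have hτy : τ ≤ y := by omega
    have hτx : x ≤ τ := by
      rcases hτ with h | h
      · omega
      · omega
    by_cases hbase1 : τ = i1
    · subst hbase1
      left
      exact mem_of_getLast?_eq hw.2.2.1
    by_cases hbase3 : τ = i3
    · subst hbase3
      right
      exact mem_of_getLast?_eq hw.2.2.1
    rcases walk_rec hw with ⟨heq, rfl⟩ | ⟨u, q₀, hw₀, hD, rfl⟩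
    · exact absurd heq.symm (C.r_ne_p (by have := C.hx; omega) (by have := C.hy; omega))
    · have hlen₀ : q₀.length ≤ n := by
        have hlq : (q₀ ++ [p τ]).length = q₀.length + 1 := by simp
        omega
      have hrec : ∀ γ, ((i1 ≤ γ ∧ γ < β3) ∨ (i3 ≤ γ ∧ γ < nxtB F p l x y β3)) →
          u = p γ → p i1 ∈ q₀ ++ [p τ] ∨ p i3 ∈ q₀ ++ [p τ] := by
        intro γ hγ hu
        subst hu
        rcases ih q₀ γ hlen₀ hγ hw₀ with h | h
        · exact Or.inl (List.mem_append_left _ h)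
        · exact Or.inr (List.mem_append_left _ h)
      by_cases hτB : τ ∈ BSet F p l x y
      · -- τ is a block start; must be in the low zone with i1 < τ < β3
        have hτcase : i1 < τ ∧ τ < β3 := by
          rcases hτ with h | h
          · exact ⟨by omega, h.2⟩
          · exfalso
            have hττ : β3 < τ := by
              rcases Nat.lt_or_ge β3 τ with h' | h'
              · exact h'
              · exfalso
                have : τ = β3 := by omega
                subst this
                omega
            have := nxtB_min hτB hττ
            omega
        have hτa : τ < C.aIdx := by omega
        obtain ⟨γ, hγl, hu, hcase⟩ := C.window_B hτB hτa hD
        have hnleτ : nxtB F p l x y τ ≤ β3 := nxtB_min hβ3 hτcase.2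
        have hngτ : τ < nxtB F p l x y τ := nxtB_gt hτy
        rcases hcase with h | h | h
        · exact hrec γ (Or.inl ⟨by omega, by omega⟩) hu
        · exact hrec γ (Or.inl ⟨by omega, by omega⟩) hu
        · by_cases hν : nxtB F p l x y τ = β3
          · rw [hν] at h
            refine hrec γ (Or.inr ⟨by omega, by omega⟩) hu
          · have hνB : nxtB F p l x y τ ∈ BSet F p l x y := nxtB_mem hβ3 hτcase.2
            have hνlt : nxtB F p l x y τ < β3 := by omega
            have hnn := nxtB_min hβ3 hνlt
            have hgtν : nxtB F p l x y τ < nxtB F p l x y (nxtB F p l x y τ) :=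
              nxtB_gt (mem_BSet.mp hνB).2.1
            exact hrec γ (Or.inl ⟨by omega, by omega⟩) hu
      · -- τ not a block start: unique in-arc from p (τ - 1)
        have hτgt : x < τ := by
          rcases hτ with h | h
          · omega
          · omega
        have hpar := C.not_BSet hτx hτy hτB
        have hu : u = p (τ - 1) := C.indeg_one hτgt hτy hpar u hD
        rcases hτ with h | h
        · exact hrec (τ - 1) (Or.inl ⟨by omega, by omega⟩) hu
        · exact hrec (τ - 1) (Or.inr ⟨by omega, by omega⟩) hu

end Ctx

lemma sort3 {P : ℕ → Prop} {a b c : ℕ} (ha : P a) (hb : P b) (hc : P c)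
    (hab : a ≠ b) (hac : a ≠ c) (hbc : b ≠ c) :
    ∃ u v w, u < v ∧ v < w ∧ P u ∧ P v ∧ P w := by
  rcases lt_trichotomy a b with h | h | h
  · rcases lt_trichotomy b c with g | g | g
    · exact ⟨a, b, c, h, g, ha, hb, hc⟩
    · exact absurd g hbc
    · rcases lt_trichotomy a c with f | f | f
      · exact ⟨a, c, b, f, g, ha, hc, hb⟩
      · exact absurd f hac
      · exact ⟨c, a, b, f, h, hc, ha, hb⟩
  · exact absurd h hab
  · rcases lt_trichotomy a c with g | g | g
    · exact ⟨b, a, c, h, g, hb, ha, hc⟩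
    · exact absurd g hac
    · rcases lt_trichotomy b c with f | f | f
      · exact ⟨b, c, a, f, g, hb, hc, ha⟩
      · exact absurd f hbc
      · exact ⟨c, b, a, f, h, hc, hb, ha⟩


theorem stmt12 [Fintype V] (D T : V → V → Prop) (r : V) (depth : V → ℕ) (k : ℕ)
    (hred : Reduced D r)
    (hno : ¬ HasOutBranchingWithLeaves D r k)
    (hBFS : IsBFSTree D r T depth)
    (l : ℕ) (p : ℕ → V) (hinj : Set.InjOn p (Set.Iic l))
    (hpath : ∀ i, i < l → T (p i) (p (i + 1)))
    (hdeg : ∀ i, i ≤ l → ∃! w, T (p i) w)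
    (S : Set V)
    (hS : S = {v ∈ p '' Set.Iio l | ∃ u, u ∉ p '' Set.Iic l ∧ D u v})
    (F : V → V → Prop) (hF : NiceForest D l p S F)
    (hmax : ∀ F' : V → V → Prop, NiceForest D l p S F' →
      (treeLeaves F' (p '' Set.Iic l)).ncard ≤ (treeLeaves F (p '' Set.Iic l)).ncard)
    (x y : ℕ) (hx : 1 ≤ x) (hxy : x ≤ y) (hy : y < l)
    (hnokey : ∀ i, x ≤ i → i ≤ y → p i ∉ keyVertices l p S F)
    (hb1 : ¬ F (p (x - 1)) (p x)) (hb2 : ¬ F (p y) (p (y + 1))) :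
    ∀ z, z ∉ p '' Set.Icc x y → {v ∈ p '' Set.Icc x y | D v z}.ncard ≤ 2 := by
  intro z _hz
  by_contra hcon
  push_neg at hcon
  have C : Ctx D T r depth l x y p S F :=
    ⟨hred, hBFS, hinj, hpath, hS, hF, hmax, hx, hxy, hy, hnokey, hb1, hb2⟩
  set W := {v ∈ p '' Set.Icc x y | D v z} with hW
  have hfin : W.Finite := Set.toFinite _
  -- extract three distinct elements of W
  obtain ⟨v1, v2, hv1, hv2, hne12⟩ := (Set.one_lt_ncard_iff hfin).mp (by omega)
  have hsub : ({v1, v2} : Set V) ⊆ W := by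
    rintro t (rfl | rfl)
    · exact hv1
    · exact hv2
  have hpair : ({v1, v2} : Set V).ncard = 2 := Set.ncard_pair hne12
  have hdiff : (W \ {v1, v2}).ncard = W.ncard - 2 := by
    rw [Set.ncard_diff hsub (Set.toFinite _), hpair]
  have hne3 : (W \ {v1, v2}).Nonempty := by
    apply Set.nonempty_of_ncard_ne_zero
    omega
  obtain ⟨v3, hv3W, hv3ne⟩ := hne3
  have hne13 : v1 ≠ v3 := fun h => hv3ne (Or.inl h.symm)
  have hne23 : v2 ≠ v3 := fun h => hv3ne (Or.inr h.symm)
  -- indices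
  obtain ⟨⟨j1, hj1, rfl⟩, hD1⟩ := hv1
  obtain ⟨⟨j2, hj2, rfl⟩, hD2⟩ := hv2
  obtain ⟨⟨j3, hj3, rfl⟩, hD3⟩ := hv3W
  rw [Set.mem_Icc] at hj1 hj2 hj3
  have hyl : y ≤ l := C.hy.le
  obtain ⟨i1, i2, i3, h12, h23, hP1, hP2, hP3⟩ :=
    sort3 (P := fun j => x ≤ j ∧ j ≤ y ∧ D (p j) z)
      ⟨hj1.1, hj1.2, hD1⟩ ⟨hj2.1, hj2.2, hD2⟩ ⟨hj3.1, hj3.2, hD3⟩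
      (fun h => hne12 (by rw [h])) (fun h => hne13 (by rw [h]))
      (fun h => hne23 (by rw [h]))
  obtain ⟨hi1x, hi1y, hDz1⟩ := hP1
  obtain ⟨hi2x, hi2y, hDz2⟩ := hP2
  obtain ⟨hi3x, hi3y, hDz3⟩ := hP3
  by_cases hcase : ∀ b ∈ BSet F p l x y, b ≤ i2 ∨ i3 < b
  · -- no block start in (i2, i3]: every walk to p i3 passes p i2
    have hdis : SetDisconnects D r {p i2} (p i3) := by
      constructor
      · intro hmem
        rw [Set.mem_singleton_iff] at hmem
        have : i3 = i2 := C.p_inj (by omega) (by omega) hmem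
        omega
      · intro q hq
        exact ⟨p i2, rfl,
          C.visits_low (by omega) hi2y q.length q i3 le_rfl (by omega) hi3y hcase hq⟩
    have hrule := hred.rule4 {p i2} (p i3) z
      (by rw [Set.ncard_singleton]; omega) hdis
      (by
        intro u hu
        rw [Set.mem_singleton_iff] at hu
        rw [hu]; exact hDz2)
    exact hrule hDz3
  · -- there is a block start in (i2, i3]
    push_neg at hcase
    obtain ⟨b, hbB, hbi2, hbi3⟩ := hcase
    have hne : ((BSet F p l x y).filter (fun m => m ≤ i3)).Nonempty :=
      ⟨b, Finset.mem_filter.mpr ⟨hbB, by omega⟩⟩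
    set β3 := ((BSet F p l x y).filter (fun m => m ≤ i3)).max' hne with hβ3def
    have hβ3f := Finset.max'_mem _ hne
    rw [Finset.mem_filter] at hβ3f
    obtain ⟨hβ3B, hβ3i3⟩ := hβ3f
    have hbβ3 : b ≤ β3 := Finset.le_max' _ _ (Finset.mem_filter.mpr ⟨hbB, by omega⟩)
    have hi2β3 : i2 < β3 := by omega
    have hi3n : i3 < nxtB F p l x y β3 := by
      by_contra hni
      push_neg at hni
      have hne2 : ((BSet F p l x y).filter (fun m => β3 < m)).Nonempty := by
        by_contra h
        rw [nxtB, dif_neg h] at hni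
        omega
      have hmm := Finset.min'_mem _ hne2
      rw [Finset.mem_filter] at hmm
      have heqn : nxtB F p l x y β3 = ((BSet F p l x y).filter (fun m => β3 < m)).min' hne2 := by
        rw [nxtB, dif_pos hne2]
      have : ((BSet F p l x y).filter (fun m => β3 < m)).min' hne2 ≤ β3 :=
        Finset.le_max' _ _ (Finset.mem_filter.mpr ⟨hmm.1, by omega⟩)
      omega
    have hsep := C.visits_pair (i1 := i1) (i3 := i3) (β3 := β3) hi1x hβ3B (by omega)
      (by omega) hi3n
    have hdis : SetDisconnects D r {p i1, p i3} (p i2) := by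
      constructor
      · rintro (hmem | hmem)
        · have : i2 = i1 := C.p_inj (by omega) (by omega) hmem
          omega
        · rw [Set.mem_singleton_iff] at hmem
          have : i2 = i3 := C.p_inj (by omega) (by omega) hmem
          omega
      · intro q hq
        rcases hsep q.length q i2 le_rfl (Or.inl ⟨by omega, by omega⟩) hq with h | h
        · exact ⟨p i1, Or.inl rfl, h⟩
        · exact ⟨p i3, Or.inr rfl, h⟩
    have hrule := hred.rule4 {p i1, p i3} (p i2) z
      (le_trans (Set.ncard_insert_le _ _) (by rw [Set.ncard_singleton]))
      hdis
      (by
        rintro u (hu | hu)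
        · rw [hu]; exact hDz1
        · rw [Set.mem_singleton_iff] at hu
          rw [hu]; exact hDz3)
    exact hrule hDz2
end
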